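/- arXiv:1405.2480 — 2 statements merged into one kernel-verified Lean document; each statement's English description precedes it below -/
import Mathlib

section
/- Let X ⊂ Z^n be a finite set satisfying the support hyperplane property, and let z₁, z₂ ∈ conv(X) ∩ Z^n be two distinct integer points with z₁, z₂ ∉ X. Then there exist disjoint subsets X₁, X₂ ⊆ X with |X₁| + |X₂| ≥ |X| − 2 such that both X₁ ∪ {z₁, z₂} and X₂ ∪ {z₁, z₂} satisfy the support hyperplane property. -/
/-- Coordinatewise cast of an integer point to `ℝⁿ`. -/
def icast {n : ℕ} (v : Fin n → ℤ) : Fin n → ℝ := fun i => (v i : ℝ)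

/-- The support hyperplane property. -/
def SHP {n : ℕ} (X : Finset (Fin n → ℤ)) : Prop :=
  ∀ y ∈ X, ∃ (f : Fin n → ℝ) (g : ℝ),
    (∑ i, f i * (y i : ℝ)) = g ∧ ∀ x ∈ X, x ≠ y → (∑ i, f i * (x i : ℝ)) < g



def dot {n : ℕ} (f v : Fin n → ℝ) : ℝ := ∑ i, f i * v i

lemma dot_sub_right {n : ℕ} (f a b : Fin n → ℝ) : dot f (a - b) = dot f a - dot f b := by
  simp [dot, mul_sub, Finset.sum_sub_distrib]

lemma dot_add_right {n : ℕ} (f a b : Fin n → ℝ) : dot f (a + b) = dot f a + dot f b := by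
  simp [dot, mul_add, Finset.sum_add_distrib]

lemma dot_smul_right {n : ℕ} (f a : Fin n → ℝ) (t : ℝ) : dot f (t • a) = t * dot f a := by
  simp [dot, Finset.mul_sum]; apply Finset.sum_congr rfl; intros; ring

lemma dot_comm {n : ℕ} (f v : Fin n → ℝ) : dot f v = dot v f := by
  simp [dot, mul_comm]

lemma dot_sub_left {n : ℕ} (a b v : Fin n → ℝ) : dot (a - b) v = dot a v - dot b v := by
  rw [dot_comm, dot_sub_right, dot_comm a, dot_comm b]

lemma dot_smul_left {n : ℕ} (a v : Fin n → ℝ) (t : ℝ) : dot (t • a) v = t * dot a v := by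
  rw [dot_comm, dot_smul_right, dot_comm]

lemma dot_neg_left {n : ℕ} (a v : Fin n → ℝ) : dot (-a) v = - dot a v := by
  simp [dot, Finset.sum_neg_distrib]

lemma dot_self_nonneg {n : ℕ} (v : Fin n → ℝ) : 0 ≤ dot v v :=
  Finset.sum_nonneg (fun i _ => mul_self_nonneg _)

lemma eq_zero_of_dot_self {n : ℕ} (v : Fin n → ℝ) (h : dot v v = 0) : v = 0 := by
  funext i
  have := (Finset.sum_eq_zero_iff_of_nonneg (fun i _ => mul_self_nonneg (v i))).mp h i (Finset.mem_univ i)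
  have := mul_self_eq_zero.mp this
  simpa using this

lemma icast_inj {n : ℕ} : Function.Injective (icast (n := n)) := by
  intro a b h
  funext i
  have : (a i : ℝ) = (b i : ℝ) := congrFun h i
  exact_mod_cast this

lemma exists_pos_forall_mul_lt {α : Type*} (S : Finset α) (a b : α → ℝ)
    (ha : ∀ x ∈ S, 0 < a x) : ∃ ε : ℝ, 0 < ε ∧ ∀ x ∈ S, ε * b x < a x := by
  classical
  set F : Finset ℝ := insert 1 (S.image fun x => a x / (|b x| + 1)) with hF
  have hFne : F.Nonempty := ⟨1, Finset.mem_insert_self _ _⟩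
  refine ⟨F.min' hFne, ?_, ?_⟩
  · have : ∀ r ∈ F, 0 < r := by
      intro r hr
      rw [hF, Finset.mem_insert] at hr
      rcases hr with h1 | h2
      · simp [h1]
      · obtain ⟨x, hx, rfl⟩ := Finset.mem_image.mp h2
        exact div_pos (ha x hx) (by positivity)
    exact this _ (F.min'_mem hFne)
  · intro x hx
    have hmem : a x / (|b x| + 1) ∈ F := Finset.mem_insert_of_mem (Finset.mem_image_of_mem _ hx)
    have hle : F.min' hFne ≤ a x / (|b x| + 1) := Finset.min'_le _ _ hmem
    have hpos : (0:ℝ) < |b x| + 1 := by positivity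
    have h1 : F.min' hFne * (|b x| + 1) ≤ a x := by
      rw [← le_div_iff₀ hpos]; exact hle
    have hεpos : 0 < F.min' hFne := by
      have : ∀ r ∈ F, 0 < r := by
        intro r hr
        rw [hF, Finset.mem_insert] at hr
        rcases hr with h1 | h2
        · simp [h1]
        · obtain ⟨y, hy, rfl⟩ := Finset.mem_image.mp h2
          exact div_pos (ha y hy) (by positivity)
      exact this _ (F.min'_mem hFne)
    calc F.min' hFne * b x ≤ F.min' hFne * |b x| := by
            exact mul_le_mul_of_nonneg_left (le_abs_self _) hεpos.le
      _ < F.min' hFne * (|b x| + 1) := by nlinarith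
      _ ≤ a x := h1

lemma hull_lt {n : ℕ} (X : Finset (Fin n → ℤ)) (y₀ : Fin n → ℤ) (hy : y₀ ∈ X)
    (f : Fin n → ℝ) (g : ℝ) (hfy : dot f (icast y₀) = g)
    (hlt : ∀ x ∈ X, x ≠ y₀ → dot f (icast x) < g)
    (z : Fin n → ℤ) (hz : icast z ∈ convexHull ℝ (icast '' (X : Set (Fin n → ℤ))))
    (hzX : z ∉ X) : dot f (icast z) < g := by
  classical
  set Y : Finset (Fin n → ℝ) := X.image icast with hY
  have hset : icast '' (X : Set (Fin n → ℤ)) = (Y : Set (Fin n → ℝ)) := by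
    rw [hY, Finset.coe_image]
  rw [hset, Finset.convexHull_eq] at hz
  obtain ⟨w, hw0, hw1, hcm⟩ := hz
  have hle : ∀ v ∈ Y, dot f v ≤ g := by
    intro v hv
    obtain ⟨x, hx, rfl⟩ := Finset.mem_image.mp hv
    by_cases hxy : x = y₀
    · subst hxy; exact le_of_eq hfy
    · exact (hlt x hx hxy).le
  have hz_eq : icast z = ∑ v ∈ Y, w v • v := by
    rw [← hcm]
    rw [Finset.centerMass, hw1]
    simp
  have hdot : dot f (icast z) = ∑ v ∈ Y, w v * dot f v := by
    rw [hz_eq]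
    simp only [dot, Finset.mul_sum]
    rw [Finset.sum_comm]
    apply Finset.sum_congr rfl
    intro i _
    rw [Finset.sum_apply]
    simp [Finset.mul_sum]
    apply Finset.sum_congr rfl
    intros; ring
  by_cases hsup : ∃ v ∈ Y, 0 < w v ∧ v ≠ icast y₀
  · obtain ⟨v₁, hv₁Y, hv₁w, hv₁ne⟩ := hsup
    obtain ⟨x₁, hx₁, rfl⟩ := Finset.mem_image.mp hv₁Y
    have hx₁ne : x₁ ≠ y₀ := fun h => hv₁ne (by rw [h])
    have hstrict : dot f (icast x₁) < g := hlt x₁ hx₁ hx₁ne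
    have key : ∑ v ∈ Y, w v * dot f v < ∑ v ∈ Y, w v * g := by
      apply Finset.sum_lt_sum
      · intro v hv
        exact mul_le_mul_of_nonneg_left (hle v hv) (hw0 v hv)
      · exact ⟨icast x₁, hv₁Y, by nlinarith⟩
    rw [hdot]
    calc ∑ v ∈ Y, w v * dot f v < ∑ v ∈ Y, w v * g := key
      _ = g := by rw [← Finset.sum_mul, hw1, one_mul]
  · push_neg at hsup
    exfalso
    have : icast z = icast y₀ := by
      rw [hz_eq]
      have : ∀ v ∈ Y, w v • v = w v • icast y₀ := by
        intro v hv
        by_cases h0 : 0 < w v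
        · rw [hsup v hv h0]
        · have : w v = 0 := le_antisymm (not_lt.mp h0) (hw0 v hv)
          simp [this]
      rw [Finset.sum_congr rfl this, ← Finset.sum_smul, hw1, one_smul]
    exact hzX (icast_inj this ▸ hy)
lemma no_mid {n : ℕ} (X : Finset (Fin n → ℤ)) (hshp : SHP X)
    (a b c : Fin n → ℤ) (ha : a ∈ X) (hb : b ∈ X) (hc : c ∈ X)
    (hab : a ≠ b) (hcb : c ≠ b) (u v : ℝ) (hu : 0 < u) (hv : 0 < v) (huv : u + v = 1)
    (hmid : icast b = u • icast a + v • icast c) : False := by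
  obtain ⟨f, g, hfg, hlt⟩ := hshp b hb
  have hfb : dot f (icast b) = g := hfg
  have h1 : dot f (icast a) < g := hlt a ha hab
  have h2 : dot f (icast c) < g := hlt c hc hcb
  have : dot f (icast b) = u * dot f (icast a) + v * dot f (icast c) := by
    rw [hmid, dot_add_right, dot_smul_right, dot_smul_right]
  have hg : u * g + v * g = g := by rw [← add_mul, huv, one_mul]
  nlinarith [mul_lt_mul_of_pos_left h1 hu, mul_lt_mul_of_pos_left h2 hv]

lemma card_line_le_two {n : ℕ} (X : Finset (Fin n → ℤ)) (hshp : SHP X)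
    (p d : Fin n → ℝ) (B : Finset (Fin n → ℤ)) (hBX : B ⊆ X)
    (hB : ∀ x ∈ B, ∃ t : ℝ, icast x = p + t • d) : B.card ≤ 2 := by
  classical
  by_contra hcard
  push_neg at hcard
  obtain ⟨a, b, c, ha, hb, hc, hab, hac, hbc⟩ := Finset.two_lt_card_iff.mp hcard
  obtain ⟨ta, hta⟩ := hB a ha
  obtain ⟨tb, htb⟩ := hB b hb
  obtain ⟨tc, htc⟩ := hB c hc
  have hinj : ∀ {x y : Fin n → ℤ} {s t : ℝ}, x ≠ y → icast x = p + s • d → icast y = p + t • d → s ≠ t := by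
    intro x y s t hxy hx hy hst
    apply hxy
    apply icast_inj
    rw [hx, hy, hst]
  have htab : ta ≠ tb := hinj hab hta htb
  have htac : ta ≠ tc := hinj hac hta htc
  have htbc : tb ≠ tc := hinj hbc htb htc
  -- helper: if s < m < t with icast x = p + s•d etc, middle point y is convex combo
  have mid : ∀ (x y z : Fin n → ℤ) (s m t : ℝ), x ∈ B → y ∈ B → z ∈ B →
      x ≠ y → z ≠ y → icast x = p + s • d → icast y = p + m • d → icast z = p + t • d →
      s < m → m < t → False := by
    intro x y z s m t hx hy hz hxy hzy hxs hym hzt hsm hmt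
    have hst : s < t := hsm.trans hmt
    have hst0 : (0:ℝ) < t - s := by linarith
    set u' : ℝ := (t - m)/(t - s) with hu'
    set v' : ℝ := (m - s)/(t - s) with hv'
    have hu'pos : 0 < u' := div_pos (by linarith) hst0
    have hv'pos : 0 < v' := div_pos (by linarith) hst0
    have h1 : u' + v' = 1 := by rw [hu', hv']; field_simp; ring
    have h2 : u' * s + v' * t = m := by
      rw [hu', hv']; field_simp; ring
    refine no_mid X hshp x y z (hBX hx) (hBX hy) (hBX hz) hxy hzy u' v' hu'pos hv'pos h1 ?_
    rw [hym, hxs, hzt, smul_add, smul_add, smul_smul, smul_smul]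
    calc p + m • d = (u' + v') • p + (u' * s + v' * t) • d := by rw [h1, h2, one_smul]
      _ = u' • p + (u' * s) • d + (v' • p + (v' * t) • d) := by
          rw [add_smul, add_smul]; abel
  rcases lt_trichotomy ta tb with h1 | h1 | h1
  · rcases lt_trichotomy tb tc with h2 | h2 | h2
    · exact mid a b c ta tb tc ha hb hc hab hbc.symm hta htb htc h1 h2
    · exact htbc h2
    · rcases lt_trichotomy ta tc with h3 | h3 | h3
      · exact mid a c b ta tc tb ha hc hb hac hbc hta htc htb h3 h2
      · exact htac h3
      · exact mid c a b tc ta tb hc ha hb hac.symm hab.symm htc hta htb h3 h1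
  · exact htab h1
  · rcases lt_trichotomy ta tc with h2 | h2 | h2
    · exact mid b a c tb ta tc hb ha hc hab.symm hac.symm htb hta htc h1 h2
    · exact htac h2
    · rcases lt_trichotomy tb tc with h3 | h3 | h3
      · exact mid b c a tb tc ta hb hc ha hbc hac htb htc hta h3 h2
      · exact htbc h3
      · exact mid c b a tc tb ta hc hb ha hbc.symm hab htc htb hta h3 h1
lemma single_perp {n : ℕ} (d e : Fin n → ℝ) (hd : d ≠ 0) (he : ¬ ∃ t : ℝ, e = t • d) :
    ∃ h : Fin n → ℝ, dot h d = 0 ∧ dot h e ≠ 0 := by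
  refine ⟨dot d d • e - dot e d • d, ?_, ?_⟩
  · rw [dot_sub_left, dot_smul_left, dot_smul_left]
    rw [dot_comm e d]; ring
  · intro h0
    set h : Fin n → ℝ := dot d d • e - dot e d • d with hh
    have hhd : dot h d = 0 := by
      rw [hh, dot_sub_left, dot_smul_left, dot_smul_left, dot_comm e d]; ring
    have hself : dot h h = 0 := by
      rw [hh]
      rw [dot_comm]
      rw [dot_sub_right, dot_smul_right, dot_smul_right]
      rw [← hh, h0, hhd]; ring
    have hzero : h = 0 := eq_zero_of_dot_self h hself
    have hdd : dot d d ≠ 0 := fun hc => hd (eq_zero_of_dot_self d hc)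
    apply he
    refine ⟨dot e d / dot d d, ?_⟩
    have : dot d d • e = dot e d • d := by
      have := sub_eq_zero.mp (hh ▸ hzero)
      exact this
    funext i
    have hcoord : dot d d * e i = dot e d * d i := congrFun this i
    have : e i = (dot e d / dot d d) * d i := by
      field_simp
      linarith [hcoord]
    simpa using this

lemma gen_perp {n : ℕ} (d : Fin n → ℝ) (hd : d ≠ 0) (S : Finset (Fin n → ℝ))
    (hS : ∀ e ∈ S, ¬ ∃ t : ℝ, e = t • d) :
    ∃ h : Fin n → ℝ, dot h d = 0 ∧ ∀ e ∈ S, dot h e ≠ 0 := by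
  classical
  induction S using Finset.induction_on with
  | empty => exact ⟨0, by simp [dot], by simp⟩
  | @insert e S he ih =>
    obtain ⟨h, hhd, hhS⟩ := ih (fun e' he' => hS e' (Finset.mem_insert_of_mem he'))
    obtain ⟨h', hh'd, hh'e⟩ := single_perp d e hd (hS e (Finset.mem_insert_self _ _))
    set F : Finset ℝ := insert (-(dot h e / dot h' e)) (S.image fun e' => -(dot h e' / dot h' e')) with hF
    obtain ⟨c, hc⟩ := Infinite.exists_notMem_finset F
    refine ⟨h + c • h', ?_, ?_⟩
    · rw [dot_comm, dot_add_right, dot_smul_right, dot_comm d h, dot_comm d h', hhd, hh'd]; ring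
    · intro e' he'
      have hval : dot (h + c • h') e' = dot h e' + c * dot h' e' := by
        rw [dot_comm, dot_add_right, dot_smul_right, dot_comm e' h, dot_comm e' h']
      rw [hval]
      intro hcon
      rcases Finset.mem_insert.mp he' with rfl | hmem
      · have : c = -(dot h e' / dot h' e') := by
          field_simp
          linarith [hcon]
        exact hc (this ▸ Finset.mem_insert_self _ _)
      · by_cases h0 : dot h' e' = 0
        · rw [h0, mul_zero, add_zero] at hcon
          exact hhS e' hmem hcon
        · have : c = -(dot h e' / dot h' e') := by
            field_simp
            linarith [hcon]
          exact hc (this ▸ Finset.mem_insert_of_mem (Finset.mem_image_of_mem _ hmem))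
lemma shp_side {n : ℕ} (X' : Finset (Fin n → ℤ)) (z₁ z₂ : Fin n → ℤ) (hne : z₁ ≠ z₂)
    (h : Fin n → ℝ) (hz12 : dot h (icast z₁) = dot h (icast z₂))
    (hpos : ∀ x ∈ X', dot h (icast z₁) < dot h (icast x))
    (hexp : ∀ y ∈ X', ∃ (f : Fin n → ℝ) (g : ℝ), dot f (icast y) = g ∧
      (∀ x ∈ X', x ≠ y → dot f (icast x) < g) ∧ dot f (icast z₁) < g ∧ dot f (icast z₂) < g) :
    SHP (X' ∪ {z₁, z₂}) := by
  classical
  have hmem : ∀ x, x ∈ X' ∪ ({z₁, z₂} : Finset (Fin n → ℤ)) ↔ x ∈ X' ∨ x = z₁ ∨ x = z₂ := by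
    intro x; simp only [Finset.mem_union, Finset.mem_insert, Finset.mem_singleton]
  set k : Fin n → ℝ := icast z₁ - icast z₂ with hk
  have hkne : k ≠ 0 := by
    intro h0
    exact hne (icast_inj (sub_eq_zero.mp (hk ▸ h0)))
  have hkk : 0 < dot k k :=
    lt_of_le_of_ne (dot_self_nonneg k) (fun hc => hkne (eq_zero_of_dot_self k hc.symm))
  have hkdiff : dot k (icast z₁) - dot k (icast z₂) = dot k k := by
    rw [← dot_sub_right]
  intro y hy
  rcases (hmem y).mp hy with hyX | heq | heq
  · obtain ⟨f, g, hfy, hfX, hfz₁, hfz₂⟩ := hexp y hyX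
    refine ⟨f, g, hfy, ?_⟩
    intro x hx hxy
    rcases (hmem x).mp hx with hxX | rfl | rfl
    · exact hfX x hxX hxy
    · exact hfz₁
    · exact hfz₂
  · -- y = z₁
    rw [heq]
    obtain ⟨ε, hε, hbound⟩ := exists_pos_forall_mul_lt X'
      (fun x => dot h (icast x) - dot h (icast z₁))
      (fun x => dot k (icast x) - dot k (icast z₁))
      (fun x hx => by show (0:ℝ) < dot h (icast x) - dot h (icast z₁); linarith [hpos x hx])
    refine ⟨ε • k - h, dot (ε • k - h) (icast z₁), rfl, ?_⟩
    intro x hx hxy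
    show dot (ε • k - h) (icast x) < dot (ε • k - h) (icast z₁)
    rw [dot_sub_left, dot_sub_left, dot_smul_left, dot_smul_left]
    rcases (hmem x).mp hx with hxX | rfl | rfl
    · have := hbound x hxX
      nlinarith [this]
    · exact absurd rfl hxy
    · have : ε * dot k k > 0 := mul_pos hε hkk
      nlinarith [hz12, hkdiff]
  · -- y = z₂
    rw [heq]
    obtain ⟨ε, hε, hbound⟩ := exists_pos_forall_mul_lt X'
      (fun x => dot h (icast x) - dot h (icast z₂))
      (fun x => dot k (icast z₂) - dot k (icast x))
      (fun x hx => by show (0:ℝ) < dot h (icast x) - dot h (icast z₂); linarith [hpos x hx, hz12])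
    refine ⟨(-ε) • k - h, dot ((-ε) • k - h) (icast z₂), rfl, ?_⟩
    intro x hx hxy
    show dot ((-ε) • k - h) (icast x) < dot ((-ε) • k - h) (icast z₂)
    rw [dot_sub_left, dot_sub_left, dot_smul_left, dot_smul_left]
    rcases (hmem x).mp hx with hxX | rfl | rfl
    · have := hbound x hxX
      nlinarith [this]
    · have : ε * dot k k > 0 := mul_pos hε hkk
      nlinarith [hz12, hkdiff]
    · exact absurd rfl hxy

theorem stmt_3 {n : ℕ} (X : Finset (Fin n → ℤ)) (hshp : SHP X)
    (z₁ z₂ : Fin n → ℤ)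
    (hz₁ : icast z₁ ∈ convexHull ℝ (icast '' (X : Set (Fin n → ℤ))))
    (hz₂ : icast z₂ ∈ convexHull ℝ (icast '' (X : Set (Fin n → ℤ))))
    (hz₁X : z₁ ∉ X) (hz₂X : z₂ ∉ X) (hne : z₁ ≠ z₂) :
    ∃ X₁ X₂ : Finset (Fin n → ℤ), X₁ ⊆ X ∧ X₂ ⊆ X ∧ Disjoint X₁ X₂ ∧
      X.card - 2 ≤ X₁.card + X₂.card ∧
      SHP (X₁ ∪ {z₁, z₂}) ∧ SHP (X₂ ∪ {z₁, z₂}) := by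
  classical
  set d : Fin n → ℝ := icast z₂ - icast z₁ with hd
  have hdne : d ≠ 0 := fun h0 => hne (icast_inj (sub_eq_zero.mp (hd ▸ h0))).symm
  set B : Finset (Fin n → ℤ) := X.filter (fun x => ∃ t : ℝ, icast x - icast z₁ = t • d) with hB
  have hBX : B ⊆ X := Finset.filter_subset _ _
  have hB2 : B.card ≤ 2 := by
    apply card_line_le_two X hshp (icast z₁) d B hBX
    intro x hx
    obtain ⟨t, ht⟩ := (Finset.mem_filter.mp hx).2
    refine ⟨t, ?_⟩
    have := sub_eq_iff_eq_add.mp ht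
    rw [this, add_comm]
  set S : Finset (Fin n → ℝ) := (X \ B).image (fun x => icast x - icast z₁) with hS
  have hSprop : ∀ e ∈ S, ¬ ∃ t : ℝ, e = t • d := by
    intro e heS hex
    obtain ⟨x, hx, rfl⟩ := Finset.mem_image.mp heS
    have hxB : x ∉ B := (Finset.mem_sdiff.mp hx).2
    exact hxB (Finset.mem_filter.mpr ⟨(Finset.mem_sdiff.mp hx).1, hex⟩)
  obtain ⟨h, hhd, hhS⟩ := gen_perp d hdne S hSprop
  have hz12 : dot h (icast z₁) = dot h (icast z₂) := by
    have : dot h (icast z₂) - dot h (icast z₁) = 0 := by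
      rw [← dot_sub_right, ← hd, hhd]
    linarith
  have hkey : ∀ x ∈ X \ B, dot h (icast x) ≠ dot h (icast z₁) := by
    intro x hx hc
    exact hhS _ (Finset.mem_image_of_mem _ hx) (by rw [dot_sub_right, hc, sub_self])
  set X₁ : Finset (Fin n → ℤ) := (X \ B).filter (fun x => dot h (icast z₁) < dot h (icast x)) with hX₁
  set X₂ : Finset (Fin n → ℤ) := (X \ B).filter (fun x => dot h (icast x) < dot h (icast z₁)) with hX₂
  have hX₁sub : X₁ ⊆ X := (Finset.filter_subset _ _).trans (Finset.sdiff_subset)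
  have hX₂sub : X₂ ⊆ X := (Finset.filter_subset _ _).trans (Finset.sdiff_subset)
  have hdisj : Disjoint X₁ X₂ := by
    rw [Finset.disjoint_left]
    intro a ha ha2
    have h1 := (Finset.mem_filter.mp ha).2
    have h2 := (Finset.mem_filter.mp ha2).2
    exact absurd h2 (not_lt.mpr h1.le)
  have hunion : X₁ ∪ X₂ = X \ B := by
    apply Finset.Subset.antisymm
    · exact Finset.union_subset (Finset.filter_subset _ _) (Finset.filter_subset _ _)
    · intro x hx
      rcases lt_or_gt_of_ne (hkey x hx) with hlt | hgt
      · exact Finset.mem_union_right _ (Finset.mem_filter.mpr ⟨hx, hlt⟩)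
      · exact Finset.mem_union_left _ (Finset.mem_filter.mpr ⟨hx, hgt⟩)
  have hcard : X.card - 2 ≤ X₁.card + X₂.card := by
    have h1 : X₁.card + X₂.card = (X₁ ∪ X₂).card := (Finset.card_union_of_disjoint hdisj).symm
    rw [h1, hunion, Finset.card_sdiff, Finset.inter_eq_left.mpr hBX]
    exact Nat.sub_le_sub_left hB2 X.card
  have hexp : ∀ (X' : Finset (Fin n → ℤ)), X' ⊆ X → ∀ y ∈ X',
      ∃ (f : Fin n → ℝ) (g : ℝ), dot f (icast y) = g ∧
        (∀ x ∈ X', x ≠ y → dot f (icast x) < g) ∧ dot f (icast z₁) < g ∧ dot f (icast z₂) < g := by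
    intro X' hX'X y hy
    obtain ⟨f, g, hfy, hlt⟩ := hshp y (hX'X hy)
    have hfy' : dot f (icast y) = g := hfy
    have hlt' : ∀ x ∈ X, x ≠ y → dot f (icast x) < g := hlt
    exact ⟨f, g, hfy', fun x hx hxy => hlt' x (hX'X hx) hxy,
      hull_lt X y (hX'X hy) f g hfy' hlt' z₁ hz₁ hz₁X,
      hull_lt X y (hX'X hy) f g hfy' hlt' z₂ hz₂ hz₂X⟩
  refine ⟨X₁, X₂, hX₁sub, hX₂sub, hdisj, hcard, ?_, ?_⟩
  · apply shp_side X₁ z₁ z₂ hne h hz12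
    · intro x hx
      exact (Finset.mem_filter.mp hx).2
    · exact hexp X₁ hX₁sub
  · apply shp_side X₂ z₁ z₂ hne (-h)
    · rw [dot_neg_left, dot_neg_left, hz12]
    · intro x hx
      have := (Finset.mem_filter.mp hx).2
      rw [dot_neg_left, dot_neg_left]
      linarith
    · exact hexp X₂ hX₂sub
end

section
/- Let P ⊂ R^n be the lower-bound polytope (defined by the 2(2^n − 1) inequalities ±(Σ_{i<j} x_i/2^i + x_j + Σ_{i>j} x_i/2^{i−1}) ≤ 1 for j = 1,…,n and ±(−x_{ℓ_N}/|N| + Σ_{i∈N,i≠ℓ_N} x_i/|N| − Σ_{i∉N} x_i/|N|^n) ≤ 1 for |N| ≥ 2). Then each defining inequality has exactly one integer point of P at which it holds with equality, and these 2(2^n − 1) tight integer points are pairwise distinct. -/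
/-- Left-hand side `Σ_{i<j} x_i/2^{i} + x_j + Σ_{i>j} x_i/2^{i-1}` (1-based indices in the
paper, 0-based here). -/
noncomputable def lhsJ {n : ℕ} (j : Fin n) (x : Fin n → ℝ) : ℝ :=
  (∑ i ∈ Finset.univ.filter (fun i => i < j), x i / 2 ^ (i.val + 1)) + x j +
    ∑ i ∈ Finset.univ.filter (fun i => j < i), x i / 2 ^ i.val

/-- Left-hand side `−x_{ℓ_N}/|N| + Σ_{i∈N, i≠ℓ_N} x_i/|N| − Σ_{i∉N} x_i/|N|^n` where
`ℓ_N = min N`. -/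
noncomputable def lhsN {n : ℕ} (N : Finset (Fin n)) (h : N.Nonempty) (x : Fin n → ℝ) : ℝ :=
  -x (N.min' h) / (N.card : ℝ) + (∑ i ∈ N.erase (N.min' h), x i / (N.card : ℝ)) -
    ∑ i ∈ Nᶜ, x i / (N.card : ℝ) ^ n

noncomputable def rr (m : ℕ) : ℝ := ((2:ℝ)^m)⁻¹

lemma rr_pos (m : ℕ) : 0 < rr m := by unfold rr; positivity

lemma rr_mono {a b : ℕ} (h : a ≤ b) : rr b ≤ rr a := by
  unfold rr
  apply inv_anti₀ (by positivity)
  exact pow_le_pow_right₀ (by norm_num) h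

lemma rr_succ (m : ℕ) : rr (m+1) = rr m * 2⁻¹ := by
  unfold rr; rw [pow_succ, mul_inv]

lemma rr_zero : rr 0 = 1 := by simp [rr]
lemma rr_one : rr 1 = 2⁻¹ := by norm_num [rr]
lemma rr_two : rr 2 = 4⁻¹ := by norm_num [rr]
lemma rr_le_one (m : ℕ) : rr m ≤ 1 := by have := rr_mono (Nat.zero_le m); rwa [rr_zero] at this

noncomputable def wJ {n : ℕ} (j i : Fin n) : ℝ :=
  if i < j then rr (i.val+1) else if i = j then 1 else rr i.val

noncomputable def vN {n : ℕ} (M : Finset (Fin n)) (h : M.Nonempty) (i : Fin n) : ℝ :=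
  if i = M.min' h then -((M.card:ℝ))⁻¹ else if i ∈ M then ((M.card:ℝ))⁻¹
    else -(((M.card:ℝ))^n)⁻¹

lemma lhsJ_eq {n : ℕ} (j : Fin n) (x : Fin n → ℝ) : lhsJ j x = ∑ i, x i * wJ j i := by
  unfold lhsJ
  rw [Finset.sum_filter, Finset.sum_filter]
  have hxj : x j = ∑ i, if i = j then x i else 0 := by
    rw [Finset.sum_ite_eq' Finset.univ j x]; simp
  rw [hxj, ← Finset.sum_add_distrib, ← Finset.sum_add_distrib]
  apply Finset.sum_congr rfl
  intro i _
  unfold wJ rr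
  by_cases h1 : i < j
  · simp [h1, h1.ne, (lt_asymm h1 : ¬ j < i), div_eq_mul_inv]
  · by_cases h2 : i = j
    · subst h2; simp [lt_irrefl]
    · have h3 : j < i := lt_of_le_of_ne (not_lt.mp h1) (Ne.symm h2)
      simp [h1, h2, h3, div_eq_mul_inv]

lemma lhsN_eq {n : ℕ} (M : Finset (Fin n)) (h : M.Nonempty) (x : Fin n → ℝ) :
    lhsN M h x = ∑ i, x i * vN M h i := by
  unfold lhsN
  have e1 : (∑ i ∈ M.erase (M.min' h), x i / (M.card : ℝ))
      = ∑ i, if i ∈ M.erase (M.min' h) then x i / (M.card : ℝ) else 0 := by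
    rw [Finset.sum_ite_mem]; simp
  have e2 : (∑ i ∈ Mᶜ, x i / (M.card : ℝ) ^ n)
      = ∑ i, if i ∈ Mᶜ then x i / (M.card : ℝ) ^ n else 0 := by
    rw [Finset.sum_ite_mem]; simp
  have e3 : -x (M.min' h) / (M.card : ℝ)
      = ∑ i, if i = M.min' h then -x i / (M.card : ℝ) else 0 := by
    rw [Finset.sum_ite_eq' Finset.univ (M.min' h) (fun i => -x i / (M.card : ℝ))]; simp
  rw [e1, e2, e3, ← Finset.sum_add_distrib, ← Finset.sum_sub_distrib]
  apply Finset.sum_congr rfl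
  intro i _
  unfold vN
  by_cases h1 : i = M.min' h
  · subst h1
    simp [Finset.min'_mem M h, div_eq_mul_inv]
  · by_cases h2 : i ∈ M
    · simp [h1, h2, Finset.mem_erase, Finset.mem_compl, div_eq_mul_inv]
    · simp [h1, h2, Finset.mem_erase, Finset.mem_compl, div_eq_mul_inv]

lemma lhsJ_smul {n : ℕ} (j : Fin n) (x : Fin n → ℝ) (c : ℝ) :
    lhsJ j (fun i => c * x i) = c * lhsJ j x := by
  rw [lhsJ_eq, lhsJ_eq, Finset.mul_sum]
  exact Finset.sum_congr rfl (fun i _ => by ring)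

lemma lhsN_smul {n : ℕ} (M : Finset (Fin n)) (h : M.Nonempty) (x : Fin n → ℝ) (c : ℝ) :
    lhsN M h (fun i => c * x i) = c * lhsN M h x := by
  rw [lhsN_eq, lhsN_eq, Finset.mul_sum]
  exact Finset.sum_congr rfl (fun i _ => by ring)

lemma lhsJ_zero {n : ℕ} (j : Fin n) : lhsJ j (fun _ => 0) = 0 := by
  rw [lhsJ_eq]; simp

lemma lhsN_zero {n : ℕ} (M : Finset (Fin n)) (h : M.Nonempty) : lhsN M h (fun _ => 0) = 0 := by
  rw [lhsN_eq]; simp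

lemma sum_rr_le {n : ℕ} (S : Finset (Fin n)) (a b : ℕ) (hab : a ≤ b)
    (ha : ∀ i ∈ S, a ≤ i.val) (hb : ∀ i ∈ S, i.val < b) :
    ∑ i ∈ S, rr i.val ≤ 2 * rr a - 2 * rr b := by
  have h1 : ∑ i ∈ S, rr i.val = ∑ m ∈ S.image Fin.val, rr m := by
    rw [Finset.sum_image (by intro x _ y _ hxy; exact Fin.val_injective hxy)]
  have h2 : S.image Fin.val ⊆ Finset.Ico a b := by
    intro m hm
    rw [Finset.mem_image] at hm
    obtain ⟨i, hi, rfl⟩ := hm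
    exact Finset.mem_Ico.mpr ⟨ha i hi, hb i hi⟩
  have h3 : ∑ m ∈ S.image Fin.val, rr m ≤ ∑ m ∈ Finset.Ico a b, rr m :=
    Finset.sum_le_sum_of_subset_of_nonneg h2 (fun m _ _ => (rr_pos m).le)
  have h4 : ∑ m ∈ Finset.Ico a b, rr m = 2 * rr a - 2 * rr b := by
    have : ∀ m : ℕ, rr m = ((2:ℝ)⁻¹)^m := by intro m; rw [inv_pow]; rfl
    simp_rw [this]
    rw [geom_sum_Ico (by norm_num : ((2:ℝ)⁻¹) ≠ 1) hab]
    ring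
  linarith [h1, h3, h4]

lemma sum_rr_nonneg {n : ℕ} (S : Finset (Fin n)) (c : ℕ) :
    0 ≤ ∑ i ∈ S, rr (i.val + c) :=
  Finset.sum_nonneg (fun i _ => (rr_pos _).le)

lemma sum_rr1_le {n : ℕ} (S : Finset (Fin n)) (a b : ℕ) (hab : a ≤ b)
    (ha : ∀ i ∈ S, a ≤ i.val) (hb : ∀ i ∈ S, i.val < b) :
    ∑ i ∈ S, rr (i.val + 1) ≤ rr a - rr b := by
  have h1 : ∑ i ∈ S, rr (i.val + 1) = (∑ i ∈ S, rr i.val) * 2⁻¹ := by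
    rw [Finset.sum_mul]
    exact Finset.sum_congr rfl (fun i _ => rr_succ i.val)
  have := sum_rr_le S a b hab ha hb
  rw [h1]; linarith
/-- Membership in the lower-bound polytope `P`. -/
def inLB {n : ℕ} (x : Fin n → ℝ) : Prop :=
  (∀ j : Fin n, |lhsJ j x| ≤ 1) ∧
    ∀ N : Finset (Fin n), ∀ h : 2 ≤ N.card,
      |lhsN N (Finset.card_pos.mp (lt_of_lt_of_le (by norm_num) h)) x| ≤ 1

/-- Index of a defining inequality of the lower-bound polytope: a sign together with
either `j ∈ {1,…,n}` or `N ⊆ {1,…,n}` with `|N| ≥ 2`. -/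
abbrev LBIdx (n : ℕ) := (Fin n ⊕ {N : Finset (Fin n) // 2 ≤ N.card}) × Bool

/-- Left-hand side of the defining inequality of the lower-bound polytope with index `idx`
(each inequality reads `lbIneq idx x ≤ 1`). -/
noncomputable def lbIneq {n : ℕ} (idx : LBIdx n) (x : Fin n → ℝ) : ℝ :=
  match idx with
  | (Sum.inl j, b) => (if b then 1 else -1) * lhsJ j x
  | (Sum.inr N, b) =>
      (if b then 1 else -1) *
        lhsN N.1 (Finset.card_pos.mp (lt_of_lt_of_le (by norm_num) N.2)) x
def chiN {n : ℕ} (N : Finset (Fin n)) (h : N.Nonempty) : Fin n → ℤ :=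
  fun i => if i = N.min' h then -1 else if i ∈ N then 1 else 0

lemma chi_sum {n : ℕ} (N : Finset (Fin n)) (h : N.Nonempty) (u : Fin n → ℝ) :
    ∑ i, (chiN N h i : ℝ) * u i = -u (N.min' h) + ∑ i ∈ N.erase (N.min' h), u i := by
  have h0 : ∑ i, (chiN N h i : ℝ) * u i = ∑ i ∈ N, (chiN N h i : ℝ) * u i := by
    symm
    apply Finset.sum_subset (Finset.subset_univ N)
    intro i _ hi
    have : chiN N h i = 0 := by
      unfold chiN
      rw [if_neg, if_neg]
      · exact hi
      · intro he; exact hi (he ▸ Finset.min'_mem N h)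
    rw [this]; simp
  rw [h0, ← Finset.add_sum_erase N _ (Finset.min'_mem N h)]
  have h1 : (chiN N h (N.min' h) : ℝ) = -1 := by unfold chiN; simp
  have h2 : ∀ i ∈ N.erase (N.min' h), (chiN N h i : ℝ) * u i = u i := by
    intro i hi
    rw [Finset.mem_erase] at hi
    have : chiN N h i = 1 := by unfold chiN; rw [if_neg hi.1, if_pos hi.2]
    rw [this]; simp
  rw [Finset.sum_congr rfl h2, h1]; ring

lemma lhsJ_chi {n : ℕ} (N : Finset (Fin n)) (h : N.Nonempty) (j : Fin n) :
    lhsJ j (fun i => (chiN N h i : ℝ)) =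
      -wJ j (N.min' h) + ∑ i ∈ N.erase (N.min' h), wJ j i := by
  rw [lhsJ_eq]; exact chi_sum N h (wJ j)

lemma lhsN_chi {n : ℕ} (N M : Finset (Fin n)) (h : N.Nonempty) (hM : M.Nonempty) :
    lhsN M hM (fun i => (chiN N h i : ℝ)) =
      -vN M hM (N.min' h) + ∑ i ∈ N.erase (N.min' h), vN M hM i := by
  rw [lhsN_eq]; exact chi_sum N h (vN M hM)

lemma mem_erase_min'_lt {n : ℕ} (N : Finset (Fin n)) (h : N.Nonempty) (i : Fin n)
    (hi : i ∈ N.erase (N.min' h)) : N.min' h < i := by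
  rw [Finset.mem_erase] at hi
  exact lt_of_le_of_ne (N.min'_le i hi.2) (Ne.symm hi.1)

lemma lhsJ_identity {n : ℕ} (j : Fin n) (x : Fin n → ℝ) :
    lhsJ j x = (∑ i, x i * rr (i.val+1)) +
      (∑ i ∈ Finset.univ.filter (fun i => j < i), x i * rr (i.val+1)) +
      x j * (1 - rr (j.val+1)) := by
  rw [lhsJ_eq, Finset.sum_filter]
  have hxj : x j * (1 - rr (j.val+1)) = ∑ i, if i = j then x i * (1 - rr (i.val+1)) else 0 := by
    rw [Finset.sum_ite_eq' Finset.univ j (fun i => x i * (1 - rr (i.val+1)))]; simp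
  rw [hxj, ← Finset.sum_add_distrib, ← Finset.sum_add_distrib]
  apply Finset.sum_congr rfl
  intro i _
  unfold wJ
  by_cases h1 : i < j
  · rw [if_pos h1, if_neg (lt_asymm h1), if_neg h1.ne]; ring
  · by_cases h2 : i = j
    · subst h2; rw [if_neg h1, if_pos rfl, if_neg (lt_irrefl i), if_pos rfl]; ring
    · have h3 : j < i := lt_of_le_of_ne (not_lt.mp h1) (Ne.symm h2)
      rw [if_neg h1, if_neg h2, if_pos h3, if_neg h2]
      have : rr i.val = rr (i.val + 1) * 2 := by rw [rr_succ]; ring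
      rw [this]; ring

lemma filter_not_lt_zero {n : ℕ} (hn : 0 < n) :
    Finset.univ.filter (fun i : Fin n => ¬ (⟨0, hn⟩ : Fin n) < i) = {(⟨0, hn⟩ : Fin n)} := by
  ext i
  simp only [Finset.mem_filter, Finset.mem_univ, true_and, Finset.mem_singleton, not_lt,
    Fin.le_def, Fin.ext_iff]
  omega

lemma lhsJ_zero_eq {n : ℕ} (hn : 0 < n) (x : Fin n → ℝ) :
    lhsJ (⟨0, hn⟩ : Fin n) x = 2 * ∑ i, x i * rr (i.val+1) := by
  have hsplit := Finset.sum_filter_add_sum_filter_not Finset.univ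
    (fun i : Fin n => (⟨0, hn⟩ : Fin n) < i) (fun i => x i * rr (i.val+1))
  rw [filter_not_lt_zero hn, Finset.sum_singleton] at hsplit
  rw [lhsJ_identity]
  have hr1 : rr (0+1) = 2⁻¹ := rr_one
  have : (∑ i ∈ Finset.univ.filter (fun i : Fin n => (⟨0, hn⟩ : Fin n) < i), x i * rr (i.val+1))
      = (∑ i, x i * rr (i.val+1)) - x ⟨0, hn⟩ * rr 1 := by
    simp only at hsplit ⊢
    linarith [hsplit]
  rw [this]
  simp only [hr1]
  norm_num [rr_one]
  ring
lemma wJ_nonneg {n : ℕ} (j i : Fin n) : 0 ≤ wJ j i := by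
  unfold wJ; split_ifs <;> first | exact (rr_pos _).le | norm_num

lemma wJ_le_one {n : ℕ} (j i : Fin n) : wJ j i ≤ 1 := by
  unfold wJ; split_ifs <;> first | exact rr_le_one _ | norm_num

lemma wJ_le_half {n : ℕ} (j i : Fin n) (h : i ≠ j) : wJ j i ≤ 2⁻¹ := by
  unfold wJ
  rw [if_neg h]
  by_cases h1 : i < j
  · rw [if_pos h1]
    calc rr (i.val + 1) ≤ rr 1 := rr_mono (by omega)
    _ = 2⁻¹ := rr_one
  · rw [if_neg h1]
    have h3 : j < i := lt_of_le_of_ne (not_lt.mp h1) (Ne.symm h)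
    have : 1 ≤ i.val := by
      have := Fin.lt_def.mp h3; omega
    calc rr i.val ≤ rr 1 := rr_mono this
    _ = 2⁻¹ := rr_one

lemma evJ_main {n : ℕ} (N : Finset (Fin n)) (hN : N.Nonempty) (j : Fin n) :
    (-1 ≤ lhsJ j (fun i => (chiN N hN i : ℝ)) ∧ lhsJ j (fun i => (chiN N hN i : ℝ)) < 1) ∧
      (lhsJ j (fun i => (chiN N hN i : ℝ)) = -1 → N = {j}) := by
  have hrn : 0 < rr n := rr_pos n
  rw [lhsJ_chi]
  by_cases hjN : j ∈ N
  · by_cases hjl : j = N.min' hN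
    · -- case j = min
      rw [← hjl]
      have hw : wJ j j = 1 := by unfold wJ; rw [if_neg (lt_irrefl j), if_pos rfl]
      have hterm : ∀ i ∈ N.erase j, wJ j i = rr i.val := by
        intro i hi
        have hi' : i ∈ N.erase (N.min' hN) := by rw [← hjl]; exact hi
        have hlt : j < i := hjl ▸ mem_erase_min'_lt N hN i hi'
        unfold wJ; rw [if_neg (lt_asymm hlt), if_neg hlt.ne']
      rw [hw, Finset.sum_congr rfl hterm]
      have hS0 : 0 ≤ ∑ i ∈ N.erase j, rr i.val :=
        Finset.sum_nonneg (fun i _ => (rr_pos _).le)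
      have hSle : ∑ i ∈ N.erase j, rr i.val ≤ 2 * rr (j.val + 1) - 2 * rr n := by
        apply sum_rr_le _ (j.val+1) n (by omega)
        · intro i hi
          have hi' : i ∈ N.erase (N.min' hN) := by rw [← hjl]; exact hi
          have hlt : j < i := hjl ▸ mem_erase_min'_lt N hN i hi'
          have := Fin.lt_def.mp hlt; omega
        · intro i _; exact i.isLt
      have h2r : 2 * rr (j.val + 1) = rr j.val := by rw [rr_succ]; ring
      have hrj1 : rr j.val ≤ 1 := rr_le_one _
      refine ⟨⟨by linarith, by linarith⟩, ?_⟩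
      intro heq
      have hS : ∑ i ∈ N.erase j, rr i.val = 0 := by linarith
      have hE : N.erase j = ∅ := by
        by_contra hne
        have : 0 < ∑ i ∈ N.erase j, rr i.val :=
          Finset.sum_pos (fun i _ => rr_pos _) (Finset.nonempty_of_ne_empty hne)
        linarith
      rcases (Finset.erase_eq_empty_iff N j).mp hE with h' | h'
      · exact absurd h' hN.ne_empty
      · exact h'
    · -- case j ∈ N, j ≠ min
      have hjE : j ∈ N.erase (N.min' hN) := Finset.mem_erase.mpr ⟨hjl, hjN⟩
      have hlj : N.min' hN < j := lt_of_le_of_ne (N.min'_le j hjN) (Ne.symm hjl)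
      have hwl : wJ j (N.min' hN) = rr ((N.min' hN).val + 1) := by
        unfold wJ; rw [if_pos hlj]
      rw [hwl, ← Finset.add_sum_erase _ _ hjE]
      have hwj : wJ j j = 1 := by unfold wJ; rw [if_neg (lt_irrefl j), if_pos rfl]
      rw [hwj]
      set E2 := (N.erase (N.min' hN)).erase j with hE2
      have hsplit := Finset.sum_filter_add_sum_filter_not E2 (fun i => i < j) (wJ j)
      have hP1 : ∑ i ∈ E2.filter (fun i => i < j), wJ j i
          ≤ rr ((N.min' hN).val + 1) - rr j.val := by
        have : ∀ i ∈ E2.filter (fun i => i < j), wJ j i = rr (i.val + 1) := by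
          intro i hi
          rw [Finset.mem_filter] at hi
          unfold wJ; rw [if_pos hi.2]
        rw [Finset.sum_congr rfl this]
        apply sum_rr1_le _ _ _ (by exact Fin.lt_def.mp hlj)
        · intro i hi
          rw [Finset.mem_filter, hE2, Finset.mem_erase] at hi
          have := Fin.lt_def.mp (mem_erase_min'_lt N hN i hi.1.2); omega
        · intro i hi
          rw [Finset.mem_filter] at hi
          exact Fin.lt_def.mp hi.2
      have hP2 : ∑ i ∈ E2.filter (fun i => ¬ i < j), wJ j i
          ≤ 2 * rr (j.val + 1) - 2 * rr n := by
        have : ∀ i ∈ E2.filter (fun i => ¬ i < j), wJ j i = rr i.val := by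
          intro i hi
          rw [Finset.mem_filter, hE2, Finset.mem_erase] at hi
          unfold wJ; rw [if_neg hi.2, if_neg hi.1.1]
        rw [Finset.sum_congr rfl this]
        apply sum_rr_le _ (j.val + 1) n (by omega)
        · intro i hi
          rw [Finset.mem_filter, hE2, Finset.mem_erase] at hi
          have h4 : j < i := lt_of_le_of_ne (not_lt.mp hi.2) (Ne.symm hi.1.1)
          have := Fin.lt_def.mp h4; omega
        · intro i _; exact i.isLt
      have hP1n : 0 ≤ ∑ i ∈ E2.filter (fun i => i < j), wJ j i :=
        Finset.sum_nonneg (fun i _ => wJ_nonneg j i)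
      have hP2n : 0 ≤ ∑ i ∈ E2.filter (fun i => ¬ i < j), wJ j i :=
        Finset.sum_nonneg (fun i _ => wJ_nonneg j i)
      have h2r : 2 * rr (j.val + 1) = rr j.val := by rw [rr_succ]; ring
      have hrl : rr ((N.min' hN).val + 1) ≤ 2⁻¹ := by
        calc rr ((N.min' hN).val + 1) ≤ rr 1 := rr_mono (by omega)
        _ = 2⁻¹ := rr_one
      have hsum : ∑ i ∈ E2, wJ j i ≤ rr ((N.min' hN).val + 1) - 2 * rr n := by
        rw [← hsplit]; linarith
      have hsumn : 0 ≤ ∑ i ∈ E2, wJ j i := by rw [← hsplit]; linarith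
      constructor
      · constructor
        · linarith
        · linarith
      · intro heq; exfalso; linarith
  · -- case j ∉ N
    have hlj : N.min' hN ≠ j := by
      intro he; exact hjN (he ▸ Finset.min'_mem N hN)
    have hwl0 : 0 ≤ wJ j (N.min' hN) := wJ_nonneg _ _
    have hwlh : wJ j (N.min' hN) ≤ 2⁻¹ := wJ_le_half j _ hlj
    have hEn : 0 ≤ ∑ i ∈ N.erase (N.min' hN), wJ j i :=
      Finset.sum_nonneg (fun i _ => wJ_nonneg j i)
    have hNsum : ∑ i ∈ N.erase (N.min' hN), wJ j i ≤ ∑ i ∈ N, wJ j i :=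
      Finset.sum_le_sum_of_subset_of_nonneg (Finset.erase_subset _ _)
        (fun i _ _ => wJ_nonneg j i)
    have hNle : ∑ i ∈ N, wJ j i ≤ 1 - 2 * rr n := by
      have hsplit := Finset.sum_filter_add_sum_filter_not N (fun i => i < j) (wJ j)
      have hP1 : ∑ i ∈ N.filter (fun i => i < j), wJ j i ≤ rr 0 - rr j.val := by
        have : ∀ i ∈ N.filter (fun i => i < j), wJ j i = rr (i.val + 1) := by
          intro i hi
          rw [Finset.mem_filter] at hi
          unfold wJ; rw [if_pos hi.2]
        rw [Finset.sum_congr rfl this]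
        apply sum_rr1_le _ _ _ (Nat.zero_le _)
        · intro i _; omega
        · intro i hi
          rw [Finset.mem_filter] at hi
          exact Fin.lt_def.mp hi.2
      have hP2 : ∑ i ∈ N.filter (fun i => ¬ i < j), wJ j i
          ≤ 2 * rr (j.val + 1) - 2 * rr n := by
        have : ∀ i ∈ N.filter (fun i => ¬ i < j), wJ j i = rr i.val := by
          intro i hi
          rw [Finset.mem_filter] at hi
          have hne : i ≠ j := fun he => hjN (he ▸ hi.1)
          unfold wJ; rw [if_neg hi.2, if_neg hne]
        rw [Finset.sum_congr rfl this]
        apply sum_rr_le _ (j.val + 1) n (by omega)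
        · intro i hi
          rw [Finset.mem_filter] at hi
          have hne : i ≠ j := fun he => hjN (he ▸ hi.1)
          have h4 : j < i := lt_of_le_of_ne (not_lt.mp hi.2) (Ne.symm hne)
          have := Fin.lt_def.mp h4; omega
        · intro i _; exact i.isLt
      have h2r : 2 * rr (j.val + 1) = rr j.val := by rw [rr_succ]; ring
      rw [← hsplit, rr_zero] at *
      linarith
    have hrn : 0 < rr n := rr_pos n
    constructor
    · constructor
      · linarith
      · have : ∑ i ∈ N.erase (N.min' hN), wJ j i ≤ 1 - 2 * rr n := le_trans hNsum hNle
        linarith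
    · intro heq; exfalso; linarith

lemma evJ_singleton {n : ℕ} (j : Fin n) :
    lhsJ j (fun i => (chiN {j} (Finset.singleton_nonempty j) i : ℝ)) = -1 := by
  rw [lhsJ_chi]
  rw [Finset.min'_singleton, Finset.erase_singleton, Finset.sum_empty]
  have : wJ j j = 1 := by unfold wJ; rw [if_neg (lt_irrefl j), if_pos rfl]
  rw [this]; ring
lemma evN_num {k n : ℕ} (hk : 2 ≤ k) (hkn : k ≤ n) :
    ((n:ℝ) - 1) * k < ((k:ℝ) - 1) * (k:ℝ)^n := by
  have h0 : (n:ℕ) ≤ 2^(n-1) := by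
    have := (n-1).lt_two_pow_self; omega
  have h2 : (2:ℕ)^(n-1) ≤ k^(n-1) := Nat.pow_le_pow_left hk _
  have h3 : (n:ℕ) ≤ k^(n-1) := le_trans h0 h2
  have h3R : (n:ℝ) ≤ (k:ℝ)^(n-1) := by exact_mod_cast h3
  have hn1 : n - 1 + 1 = n := by omega
  have hpow : (k:ℝ)^(n-1) * k = (k:ℝ)^n := by
    rw [← pow_succ, hn1]
  have hkR : (2:ℝ) ≤ (k:ℝ) := by exact_mod_cast hk
  have hknR_pos : (0:ℝ) < (k:ℝ)^n := by positivity
  nlinarith [hknR_pos, hkR, h3R, hpow]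

lemma evN_main {n : ℕ} (N M : Finset (Fin n)) (hN : N.Nonempty) (hM : M.Nonempty)
    (hM2 : 2 ≤ M.card) :
    (-1 < lhsN M hM (fun i => (chiN N hN i : ℝ)) ∧
        lhsN M hM (fun i => (chiN N hN i : ℝ)) ≤ 1) ∧
      (lhsN M hM (fun i => (chiN N hN i : ℝ)) = 1 ↔ M = N) := by
  have hkn : M.card ≤ n := by
    have := Finset.card_le_univ M; simpa using this
  have hn2 : 2 ≤ n := le_trans hM2 hkn
  set k := M.card with hk
  set kR := (k:ℝ) with hkR
  have hkR2 : (2:ℝ) ≤ kR := by rw [hkR]; exact_mod_cast hM2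
  have hkpos : (0:ℝ) < kR := by linarith
  have hknpos : (0:ℝ) < kR^n := by positivity
  have hkinv_pos : (0:ℝ) < kR⁻¹ := by positivity
  have hkninv_pos : (0:ℝ) < (kR^n)⁻¹ := by positivity
  have hkltkn : kR < kR^n := by
    have h1 : (1:ℝ) < kR^(n-1) := by
      apply one_lt_pow₀ (by linarith) (by omega)
    have hn1 : n - 1 + 1 = n := by omega
    have hpow : kR^(n-1) * kR = kR^n := by rw [← pow_succ, hn1]
    nlinarith
  have hkninv_lt : (kR^n)⁻¹ < kR⁻¹ := by
    exact inv_strictAnti₀ hkpos hkltkn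
  set m := M.min' hM with hm
  set ℓ := N.min' hN with hℓ
  have hmM : m ∈ M := M.min'_mem hM
  -- values of vN
  have hvm : vN M hM m = -kR⁻¹ := by unfold vN; rw [if_pos rfl]
  have hvmem : ∀ i ∈ M.erase m, vN M hM i = kR⁻¹ := by
    intro i hi
    rw [Finset.mem_erase] at hi
    unfold vN; rw [if_neg hi.1, if_pos hi.2]
  have hvout : ∀ i, i ∉ M → vN M hM i = -(kR^n)⁻¹ := by
    intro i hi
    have : i ≠ m := fun he => hi (he ▸ hmM)
    unfold vN; rw [if_neg this, if_neg hi]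
  have hvle : ∀ i, vN M hM i ≤ kR⁻¹ := by
    intro i
    by_cases h1 : i ∈ M.erase m
    · rw [hvmem i h1]
    · by_cases h2 : i = m
      · rw [h2, hvm]; linarith
      · have : i ∉ M := by
          intro hiM; exact h1 (Finset.mem_erase.mpr ⟨h2, hiM⟩)
        rw [hvout i this]; linarith
  have hvnonpos : ∀ i, i ∉ M.erase m → vN M hM i ≤ 0 := by
    intro i h1
    by_cases h2 : i = m
    · rw [h2, hvm]; linarith
    · have : i ∉ M := fun hiM => h1 (Finset.mem_erase.mpr ⟨h2, hiM⟩)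
      rw [hvout i this]; linarith
  have hvneg : ∀ i, i ∉ M.erase m → vN M hM i < 0 := by
    intro i h1
    by_cases h2 : i = m
    · rw [h2, hvm]; linarith
    · have : i ∉ M := fun hiM => h1 (Finset.mem_erase.mpr ⟨h2, hiM⟩)
      rw [hvout i this]; linarith
  have hvge' : ∀ i, i ≠ m → -(kR^n)⁻¹ ≤ vN M hM i := by
    intro i h1
    by_cases h2 : i ∈ M
    · rw [hvmem i (Finset.mem_erase.mpr ⟨h1, h2⟩)]; linarith
    · rw [hvout i h2]
  have hvge : ∀ i, -kR⁻¹ ≤ vN M hM i := by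
    intro i
    by_cases h2 : i = m
    · rw [h2, hvm]
    · have := hvge' i h2; linarith
  have hcardE : (N.erase ℓ).card = N.card - 1 := Finset.card_erase_of_mem (N.min'_mem hN)
  have hcardM : (M.erase m).card = k - 1 := Finset.card_erase_of_mem hmM
  have hcardM_R : ((M.erase m).card : ℝ) = kR - 1 := by
    rw [hcardM]
    have : 1 ≤ k := by omega
    push_cast [Nat.cast_sub this]
    ring
  rw [lhsN_chi]
  set SE := ∑ i ∈ N.erase ℓ, vN M hM i with hSE
  -- upper bounds
  have hc_le : -vN M hM ℓ ≤ kR⁻¹ := by linarith [hvge ℓ]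
  have hu_def : ∀ i : Fin n, (if i ∈ M.erase m then kR⁻¹ else 0) = (if i ∈ M.erase m then kR⁻¹ else 0) := fun _ => rfl
  have hSE_le_u : SE ≤ ∑ i ∈ N.erase ℓ, (if i ∈ M.erase m then kR⁻¹ else 0) := by
    apply Finset.sum_le_sum
    intro i _
    by_cases h1 : i ∈ M.erase m
    · rw [if_pos h1, hvmem i h1]
    · rw [if_neg h1]; exact hvnonpos i h1
  have hsum_u : ∑ i ∈ N.erase ℓ, (if i ∈ M.erase m then kR⁻¹ else 0)
      = (((N.erase ℓ) ∩ (M.erase m)).card : ℝ) * kR⁻¹ := by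
    rw [Finset.sum_ite_mem, Finset.sum_const, nsmul_eq_mul]
  have hinter_le : (((N.erase ℓ) ∩ (M.erase m)).card : ℝ) ≤ kR - 1 := by
    rw [← hcardM_R]
    exact_mod_cast Finset.card_le_card (Finset.inter_subset_right)
  have hSE_le : SE ≤ (kR - 1) * kR⁻¹ := by
    calc SE ≤ _ := hSE_le_u
    _ = _ := hsum_u
    _ ≤ (kR - 1) * kR⁻¹ := by
      apply mul_le_mul_of_nonneg_right hinter_le (le_of_lt hkinv_pos)
  have hone : kR⁻¹ + (kR - 1) * kR⁻¹ = 1 := by field_simp; ring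
  have hupper : -vN M hM ℓ + SE ≤ 1 := by linarith
  -- lower bound
  have hcardE_le : ((N.erase ℓ).card : ℝ) ≤ (n:ℝ) - 1 := by
    have h1 : (N.erase ℓ).card ≤ n - 1 := by
      have := Finset.card_le_univ N
      simp only [Finset.card_univ, Fintype.card_fin] at this
      omega
    have : ((N.erase ℓ).card : ℝ) ≤ ((n-1 : ℕ) : ℝ) := by exact_mod_cast h1
    rwa [Nat.cast_sub (by omega), Nat.cast_one] at this
  have hnum := evN_num hM2 hkn
  have h5 : ((n:ℝ) - 1) * (kR^n)⁻¹ < (kR - 1) * kR⁻¹ := by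
    have e1 : ((n:ℝ) - 1) * (kR^n)⁻¹ = ((n:ℝ) - 1) / kR^n := by ring
    have e2 : (kR - 1) * kR⁻¹ = (kR - 1) / kR := by ring
    rw [e1, e2, div_lt_div_iff₀ hknpos hkpos]
    exact hnum
  have hlower : -1 < -vN M hM ℓ + SE := by
    by_cases hmE : m ∈ N.erase ℓ
    · -- min M is in N.erase ℓ, so ℓ < m and ℓ ∉ M
      have hlm : ℓ < m := mem_erase_min'_lt N hN m hmE
      have hlM : ℓ ∉ M := by
        intro hc
        exact absurd (M.min'_le ℓ hc) (not_le.mpr hlm)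
      have hvl : vN M hM ℓ = -(kR^n)⁻¹ := hvout ℓ hlM
      have hsplit : SE = vN M hM m + ∑ i ∈ (N.erase ℓ).erase m, vN M hM i := by
        rw [hSE, ← Finset.add_sum_erase _ _ hmE]
      have hrest : -(((N.erase ℓ).erase m).card : ℝ) * (kR^n)⁻¹
          ≤ ∑ i ∈ (N.erase ℓ).erase m, vN M hM i := by
        have := Finset.sum_le_sum (s := (N.erase ℓ).erase m)
          (f := fun _ => -(kR^n)⁻¹) (g := vN M hM)
          (fun i hi => hvge' i (Finset.mem_erase.mp hi).1)
        rw [Finset.sum_const, nsmul_eq_mul] at this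
        calc -(((N.erase ℓ).erase m).card : ℝ) * (kR^n)⁻¹
            = (((N.erase ℓ).erase m).card : ℝ) * -(kR^n)⁻¹ := by ring
        _ ≤ _ := this
      have hcard2 : (((N.erase ℓ).erase m).card : ℝ) ≤ (n:ℝ) - 1 := by
        have h1 : ((N.erase ℓ).erase m).card ≤ (N.erase ℓ).card :=
          Finset.card_le_card (Finset.erase_subset _ _)
        have : (((N.erase ℓ).erase m).card : ℝ) ≤ ((N.erase ℓ).card : ℝ) := by
          exact_mod_cast h1
        linarith [hcardE_le]
      have hrest2 : -(((n:ℝ) - 1)) * (kR^n)⁻¹ ≤ ∑ i ∈ (N.erase ℓ).erase m, vN M hM i := by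
        calc -(((n:ℝ) - 1)) * (kR^n)⁻¹ ≤ -(((N.erase ℓ).erase m).card : ℝ) * (kR^n)⁻¹ := by
              apply mul_le_mul_of_nonneg_right _ (le_of_lt hkninv_pos)
              linarith
        _ ≤ _ := hrest
      rw [hsplit, hvl, hvm]
      have : kR⁻¹ + (kR-1) * kR⁻¹ = 1 := hone
      linarith
    · -- m not in N.erase ℓ : every term bounded below by -(kR^n)⁻¹
      have hge : -((N.erase ℓ).card : ℝ) * (kR^n)⁻¹ ≤ SE := by
        have := Finset.sum_le_sum (s := N.erase ℓ)
          (f := fun _ => -(kR^n)⁻¹) (g := vN M hM)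
          (fun i hi => hvge' i (fun he => hmE (he ▸ hi)))
        rw [Finset.sum_const, nsmul_eq_mul] at this
        calc -((N.erase ℓ).card : ℝ) * (kR^n)⁻¹ = ((N.erase ℓ).card : ℝ) * -(kR^n)⁻¹ := by ring
        _ ≤ _ := this
      have hge2 : -(((n:ℝ) - 1)) * (kR^n)⁻¹ ≤ SE := by
        calc -(((n:ℝ) - 1)) * (kR^n)⁻¹ ≤ -((N.erase ℓ).card : ℝ) * (kR^n)⁻¹ := by
              apply mul_le_mul_of_nonneg_right _ (le_of_lt hkninv_pos)
              linarith
        _ ≤ _ := hge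
      have hc_ge : -kR⁻¹ ≤ -vN M hM ℓ := by linarith [hvle ℓ]
      linarith
  refine ⟨⟨hlower, hupper⟩, ?_, ?_⟩
  · -- equality implies M = N
    intro heq
    have h1 : -vN M hM ℓ = kR⁻¹ := by linarith
    have h2 : SE = (kR - 1) * kR⁻¹ := by linarith
    have hlm : ℓ = m := by
      by_contra hne
      by_cases hlM : ℓ ∈ M
      · have : vN M hM ℓ = kR⁻¹ := hvmem ℓ (Finset.mem_erase.mpr ⟨hne, hlM⟩)
        rw [this] at h1; linarith
      · have : vN M hM ℓ = -(kR^n)⁻¹ := hvout ℓ hlM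
        rw [this] at h1
        linarith [hkninv_lt]
    have hEsub : N.erase ℓ ⊆ M.erase m := by
      by_contra hns
      obtain ⟨i₀, hi₀E, hi₀n⟩ := Finset.not_subset.mp hns
      have hstrict : SE < ∑ i ∈ N.erase ℓ, (if i ∈ M.erase m then kR⁻¹ else 0) := by
        apply Finset.sum_lt_sum
        · intro i _
          by_cases hh : i ∈ M.erase m
          · rw [if_pos hh, hvmem i hh]
          · rw [if_neg hh]; exact hvnonpos i hh
        · exact ⟨i₀, hi₀E, by rw [if_neg hi₀n]; exact hvneg i₀ hi₀n⟩
      have : SE < (kR - 1) * kR⁻¹ := by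
        calc SE < _ := hstrict
        _ = _ := hsum_u
        _ ≤ (kR - 1) * kR⁻¹ := mul_le_mul_of_nonneg_right hinter_le (le_of_lt hkinv_pos)
      linarith
    have hSEval : SE = ((N.erase ℓ).card : ℝ) * kR⁻¹ := by
      rw [hSE]
      rw [Finset.sum_congr rfl (fun i hi => hvmem i (hEsub hi))]
      rw [Finset.sum_const, nsmul_eq_mul]
    have hcard_eq : ((N.erase ℓ).card : ℝ) = kR - 1 := by
      have hh : ((N.erase ℓ).card : ℝ) * kR⁻¹ = (kR - 1) * kR⁻¹ := hSEval.symm.trans h2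
      exact mul_right_cancel₀ (ne_of_gt hkinv_pos) hh
    have hcard_eq' : (N.erase ℓ).card = k - 1 := by
      have : ((N.erase ℓ).card : ℝ) = ((k - 1 : ℕ) : ℝ) := by
        rw [hcard_eq, Nat.cast_sub (by omega), Nat.cast_one]
      exact_mod_cast this
    have hEeq : N.erase ℓ = M.erase m :=
      Finset.eq_of_subset_of_card_le hEsub (by rw [hcard_eq', hcardM])
    have : M = N := by
      have e1 : N = insert ℓ (N.erase ℓ) := (Finset.insert_erase (N.min'_mem hN)).symm
      have e2 : M = insert m (M.erase m) := (Finset.insert_erase hmM).symm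
      rw [e1, e2, hEeq, hlm]
    exact this
  · -- M = N implies equality
    intro heq
    subst heq
    have hmm : M.min' hN = m := rfl
    have hvl2 : -vN M hM ℓ = kR⁻¹ := by
      have : ℓ = m := by rw [hℓ, hmm]
      rw [this, hvm]; ring
    have : SE = ((M.erase ℓ).card : ℝ) * kR⁻¹ := by
      rw [hSE]
      have hle : ∀ i ∈ M.erase ℓ, vN M hM i = kR⁻¹ := by
        intro i hi
        apply hvmem
        have : ℓ = m := by rw [hℓ, hmm]
        rwa [← this]
      rw [Finset.sum_congr rfl hle, Finset.sum_const, nsmul_eq_mul]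
    rw [hvl2, this]
    have hcc : ((M.erase ℓ).card : ℝ) = kR - 1 := by
      have : ℓ = m := by rw [hℓ, hmm]
      rw [this]; exact hcardM_R
    rw [hcc]
    field_simp
    ring
lemma feas_J {n : ℕ} (x : Fin n → ℝ) (hfeas : ∀ idx : LBIdx n, lbIneq idx x ≤ 1)
    (j : Fin n) : |lhsJ j x| ≤ 1 := by
  have h1 := hfeas (Sum.inl j, true)
  have h2 := hfeas (Sum.inl j, false)
  simp only [lbIneq] at h1 h2
  norm_num at h1 h2
  rw [abs_le]; exact ⟨by linarith, h1⟩

lemma feas_N {n : ℕ} (x : Fin n → ℝ) (hfeas : ∀ idx : LBIdx n, lbIneq idx x ≤ 1)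
    (M : Finset (Fin n)) (hM2 : 2 ≤ M.card) (hMne : M.Nonempty) : |lhsN M hMne x| ≤ 1 := by
  have h1 := hfeas (Sum.inr ⟨M, hM2⟩, true)
  have h2 := hfeas (Sum.inr ⟨M, hM2⟩, false)
  simp only [lbIneq] at h1 h2
  norm_num at h1 h2
  have he : lhsN M (Finset.card_pos.mp (lt_of_lt_of_le (by norm_num) hM2)) x
      = lhsN M hMne x := rfl
  rw [he] at h1 h2
  rw [abs_le]; exact ⟨by linarith, h1⟩

lemma lhsJ_neg {n : ℕ} (j : Fin n) (x : Fin n → ℝ) :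
    lhsJ j (fun i => -x i) = -lhsJ j x := by
  have : (fun i => -x i) = fun i => (-1:ℝ) * x i := by funext i; ring
  rw [this, lhsJ_smul]; ring

lemma lhsN_neg {n : ℕ} (M : Finset (Fin n)) (h : M.Nonempty) (x : Fin n → ℝ) :
    lhsN M h (fun i => -x i) = -lhsN M h x := by
  have : (fun i => -x i) = fun i => (-1:ℝ) * x i := by funext i; ring
  rw [this, lhsN_smul]; ring

lemma feas_neg {n : ℕ} (x : Fin n → ℝ) (hfeas : ∀ idx : LBIdx n, lbIneq idx x ≤ 1) :
    ∀ idx : LBIdx n, lbIneq idx (fun i => -x i) ≤ 1 := by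
  rintro ⟨s, b⟩
  cases s with
  | inl j =>
    have h1 := hfeas (Sum.inl j, true)
    have h2 := hfeas (Sum.inl j, false)
    simp only [lbIneq] at h1 h2 ⊢
    rw [lhsJ_neg]
    cases b <;> norm_num at h1 h2 ⊢ <;> linarith
  | inr M =>
    have h1 := hfeas (Sum.inr M, true)
    have h2 := hfeas (Sum.inr M, false)
    simp only [lbIneq] at h1 h2 ⊢
    rw [lhsN_neg]
    cases b <;> norm_num at h1 h2 ⊢ <;> linarith

set_option maxHeartbeats 1600000 in
lemma classify_pos {n : ℕ} (hn : 1 ≤ n) (y : Fin n → ℤ)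
    (hfeas : ∀ idx : LBIdx n, lbIneq idx (fun i => (y i : ℝ)) ≤ 1)
    (N : Finset (Fin n)) (hNsupp : ∀ i, y i ≠ 0 ↔ i ∈ N) (hNne : N.Nonempty)
    (hpos : 1 ≤ y (N.min' hNne)) :
    y = fun i => (-1) * chiN N hNne i := by
  set x : Fin n → ℝ := fun i => (y i : ℝ) with hx
  set ℓ := N.min' hNne with hℓ
  have hJ : ∀ j, |lhsJ j x| ≤ 1 := feas_J x hfeas
  have hJu : ∀ j, lhsJ j x ≤ 1 := fun j => (abs_le.mp (hJ j)).2
  have hJl : ∀ j, -1 ≤ lhsJ j x := fun j => (abs_le.mp (hJ j)).1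
  have hn0 : 0 < n := hn
  set j0 : Fin n := ⟨0, hn0⟩ with hj0
  set A := ∑ i, x i * rr (i.val + 1) with hA_def
  have hd0 : lhsJ j0 x = 2 * A := lhsJ_zero_eq hn0 x
  have hA : |A| ≤ 2⁻¹ := by
    have := hJ j0
    rw [hd0] at this
    rw [abs_le] at this ⊢
    constructor <;> [linarith [this.1]; linarith [this.2]]
  have habs_cast : ∀ i : Fin n, |x i| = ((|y i| : ℤ) : ℝ) := by
    intro i; rw [hx]; push_cast; rfl
  -- tail bound
  have hBbound : ∀ j : Fin n, (∀ i, j < i → |y i| ≤ 1) →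
      |∑ i ∈ Finset.univ.filter (fun i => j < i), x i * rr (i.val + 1)|
        ≤ rr (j.val + 1) - rr n := by
    intro j htail
    have h1 : |∑ i ∈ Finset.univ.filter (fun i => j < i), x i * rr (i.val + 1)|
        ≤ ∑ i ∈ Finset.univ.filter (fun i => j < i), rr (i.val + 1) := by
      calc |∑ i ∈ Finset.univ.filter (fun i => j < i), x i * rr (i.val + 1)|
          ≤ ∑ i ∈ Finset.univ.filter (fun i => j < i), |x i * rr (i.val + 1)| :=
            Finset.abs_sum_le_sum_abs _ _
      _ ≤ ∑ i ∈ Finset.univ.filter (fun i => j < i), rr (i.val + 1) := by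
          apply Finset.sum_le_sum
          intro i hi
          rw [Finset.mem_filter] at hi
          rw [abs_mul, abs_of_pos (rr_pos _)]
          have h2 : |x i| ≤ 1 := by
            rw [habs_cast]
            exact_mod_cast htail i hi.2
          nlinarith [rr_pos (i.val + 1), h2, abs_nonneg (x i)]
    have h2 : ∑ i ∈ Finset.univ.filter (fun i => j < i), rr (i.val + 1)
        ≤ rr (j.val + 1) - rr n := by
      apply sum_rr1_le _ (j.val + 1) n (by omega)
      · intro i hi
        rw [Finset.mem_filter] at hi
        have := Fin.lt_def.mp hi.2; omega
      · intro i _; exact i.isLt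
    linarith
  -- Step: entries with index ≥ 2 are bounded by 1
  have step2 : ∀ K : ℕ, ∀ j : Fin n, n ≤ j.val + K → 2 ≤ j.val → |y j| ≤ 1 := by
    intro K
    induction K with
    | zero => intro j hjK _; exact absurd j.isLt (by omega)
    | succ K ih =>
      intro j hjK hj2
      have htail : ∀ i, j < i → |y i| ≤ 1 := by
        intro i hi
        have hv := Fin.lt_def.mp hi
        exact ih i (by omega) (by omega)
      have hBj := hBbound j htail
      have hid := lhsJ_identity j x
      set B := ∑ i ∈ Finset.univ.filter (fun i => j < i), x i * rr (i.val + 1) with hB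
      have ht : rr (j.val + 1) ≤ 8⁻¹ := by
        calc rr (j.val + 1) ≤ rr 3 := rr_mono (by omega)
        _ = 8⁻¹ := by norm_num [rr]
      have ht0 : 0 < rr (j.val + 1) := rr_pos _
      have hxj : |x j| * (1 - rr (j.val + 1)) ≤ 3/2 + rr (j.val + 1) := by
        have h3 : x j * (1 - rr (j.val + 1)) = lhsJ j x - A - B := by
          rw [hid]; ring
        have h4 : |x j * (1 - rr (j.val + 1))| ≤ 3/2 + rr (j.val + 1) := by
          rw [h3]
          have := hJ j
          have hBa : |B| ≤ rr (j.val + 1) - rr n := hBj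
          have := abs_le.mp hA
          have := abs_le.mp (hJ j)
          have := abs_le.mp hBa
          rw [abs_le]
          constructor <;> [linarith [rr_pos n]; linarith [rr_pos n]]
        rw [abs_mul, abs_of_pos (by linarith : (0:ℝ) < 1 - rr (j.val + 1))] at h4
        exact h4
      have hxlt : |x j| < 2 := by nlinarith [abs_nonneg (x j)]
      have : |y j| < 2 := by
        rw [habs_cast] at hxlt
        exact_mod_cast hxlt
      omega
  have h2 : ∀ i : Fin n, 2 ≤ i.val → |y i| ≤ 1 := fun i hi => step2 n i (by omega) hi
  -- facts about support
  have hmemN : ∀ i, i ∈ N ↔ y i ≠ 0 := fun i => (hNsupp i).symm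
  have hzero_lt : ∀ i, i < ℓ → y i = 0 := by
    intro i hi
    by_contra h0
    exact absurd (N.min'_le i ((hNsupp i).mp h0)) (not_le.mpr hi)
  have hylne : y ℓ ≠ 0 := (hmemN ℓ).mp (N.min'_mem hNne)
  by_cases hn2 : 2 ≤ n
  case neg =>
    -- n = 1 : trivial case
    have hn1 : n = 1 := by omega
    subst hn1
    have hall : ∀ i : Fin 1, i = j0 := by
      intro i; apply Fin.ext; omega
    have hA1 : A = x j0 * rr 1 := by
      rw [hA_def, Fin.sum_univ_one]
      congr 1
    have hyl : |y j0| ≤ 1 := by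
      have h1 : |x j0| ≤ 1 := by
        have h2 := abs_le.mp hA
        rw [hA1, rr_one] at h2
        rw [abs_le]; constructor <;> nlinarith [h2.1, h2.2]
      rw [habs_cast] at h1
      exact_mod_cast h1
    have hl0 : ℓ = j0 := hall ℓ
    have hyl1 : y ℓ = 1 := by
      rw [hl0] at hpos ⊢
      rw [abs_le] at hyl; omega
    funext i
    have hi0 : i = ℓ := by rw [hall i, hall ℓ]
    rw [hi0, hyl1]
    unfold chiN
    rw [if_pos rfl]; ring
  case pos =>
  set j1 : Fin n := ⟨1, by omega⟩ with hj1
  have hj1v : j1.val = 1 := rfl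
  have hj0v : j0.val = 0 := rfl
  have hj0j1 : j0 ≠ j1 := by
    intro h; have := congrArg Fin.val h; simp [hj0v, hj1v] at this
  set B1 := ∑ i ∈ Finset.univ.filter (fun i => j1 < i), x i * rr (i.val + 1) with hB1_def
  have htail1 : ∀ i, j1 < i → |y i| ≤ 1 := by
    intro i hi
    have := Fin.lt_def.mp hi
    exact h2 i (by omega)
  have hB1 : |B1| ≤ rr 2 - rr n := by
    have := hBbound j1 htail1
    rwa [hj1v] at this
  have hB1' := abs_le.mp hB1
  have hrn : 0 < rr n := rr_pos n
  have hrr2 : rr 2 = 4⁻¹ := rr_two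
  -- split A
  have hfil : Finset.univ.filter (fun i : Fin n => j0 < i)
      = insert j1 (Finset.univ.filter (fun i : Fin n => j1 < i)) := by
    ext i
    simp only [Finset.mem_filter, Finset.mem_univ, true_and, Finset.mem_insert,
      Fin.lt_def, Fin.ext_iff, hj0v, hj1v]
    omega
  have hB0split : ∑ i ∈ Finset.univ.filter (fun i : Fin n => j0 < i), x i * rr (i.val + 1)
      = x j1 * rr 2 + B1 := by
    rw [hfil, Finset.sum_insert (by simp [Finset.mem_filter])]
  have hAsplit : A = x j0 * rr 1 + x j1 * rr 2 + B1 := by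
    have hs := Finset.sum_filter_add_sum_filter_not Finset.univ
      (fun i : Fin n => j0 < i) (fun i => x i * rr (i.val + 1))
    rw [filter_not_lt_zero hn0] at hs
    rw [Finset.sum_singleton] at hs
    have : A = (x j1 * rr 2 + B1) + x j0 * rr (j0.val + 1) := by
      rw [hA_def, ← hs, hB0split]
    rw [this, hj0v, rr_one]; ring
  -- the key identity at index 1
  have hd1 : lhsJ j1 x = x j0 * 2⁻¹ + x j1 + 2 * B1 := by
    have hid := lhsJ_identity j1 x
    rw [← hA_def, ← hB1_def] at hid
    have e1 : rr (j1.val + 1) = 4⁻¹ := by rw [hj1v]; exact rr_two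
    rw [e1] at hid
    rw [hid, hAsplit, rr_one, hrr2]; ring
  -- entry bounds at 0, 1
  have hy1abs : |x j1| ≤ 7/3 := by
    have hAa := abs_le.mp hA
    have hJa := abs_le.mp (hJ j1)
    have h3 : x j1 * (1 - 4⁻¹) = lhsJ j1 x - A - B1 := by
      have hid := lhsJ_identity j1 x
      rw [← hA_def, ← hB1_def] at hid
      have e1 : rr (j1.val + 1) = 4⁻¹ := by rw [hj1v]; exact rr_two
      rw [e1] at hid
      rw [hid]; ring
    rw [abs_le]
    constructor <;> linarith [hJa.1, hJa.2, hAa.1, hAa.2, hB1'.1, hB1'.2, hrn]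
  have hy1R := abs_le.mp hy1abs
  have hy1int : |y j1| ≤ 2 := by
    have h4 : ((|y j1| : ℤ) : ℝ) ≤ 7/3 := by rw [← habs_cast]; exact hy1abs
    by_contra hc
    push_neg at hc
    have h5 : (3:ℤ) ≤ |y j1| := by omega
    have h6 : (3:ℝ) ≤ ((|y j1| : ℤ) : ℝ) := by exact_mod_cast h5
    linarith
  have hd0' : lhsJ j0 x = x j0 + x j1 * 2⁻¹ + 2 * B1 := by
    rw [hd0, hAsplit, rr_one, hrr2]; ring
  have hy0abs : |x j0| ≤ 8/3 := by
    have hJa := abs_le.mp (hJ j0)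
    have h3 : x j0 = lhsJ j0 x - x j1 * 2⁻¹ - 2 * B1 := by rw [hd0']; ring
    rw [abs_le]
    constructor <;> linarith [hJa.1, hJa.2, hy1R.1, hy1R.2, hB1'.1, hB1'.2, hrn]
  have hy0int : |y j0| ≤ 2 := by
    have h4 : ((|y j0| : ℤ) : ℝ) ≤ 8/3 := by rw [← habs_cast]; exact hy0abs
    by_contra hc
    push_neg at hc
    have h5 : (3:ℤ) ≤ |y j0| := by omega
    have h6 : (3:ℝ) ≤ ((|y j0| : ℤ) : ℝ) := by exact_mod_cast h5
    linarith
  -- exclusion lemmas via hd1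
  have hexcl02 : ¬ (y j0 = 0 ∧ y j1 = 2) := by
    rintro ⟨ha, hb⟩
    have hxa : x j0 = 0 := by rw [hx]; simp [ha]
    have hxb : x j1 = 2 := by rw [hx]; simp [hb]
    have := hJu j1
    rw [hd1, hxa, hxb] at this
    linarith [hB1'.1]
  have hexcl12 : ¬ (y j0 = 1 ∧ y j1 = 2) := by
    rintro ⟨ha, hb⟩
    have hxa : x j0 = 1 := by rw [hx]; simp [ha]
    have hxb : x j1 = 2 := by rw [hx]; simp [hb]
    have := hJu j1
    rw [hd1, hxa, hxb] at this
    linarith [hB1'.1]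
  have hexcl1m2 : ¬ (y j0 = 1 ∧ y j1 = -2) := by
    rintro ⟨ha, hb⟩
    have hxa : x j0 = 1 := by rw [hx]; simp [ha]
    have hxb : x j1 = -2 := by rw [hx]; simp [hb]
    have := hJl j1
    rw [hd1, hxa, hxb] at this
    linarith [hB1'.2]
  -- exclusion of y j0 = 2 using the N = {0,1} inequality
  have hexcl20 : y j0 ≠ 2 := by
    intro ha
    have hxa : x j0 = 2 := by rw [hx]; simp [ha]
    -- first y j1 = -2
    have hyj1m2 : y j1 = -2 := by
      have hu := hJu j0
      rw [hd0', hxa] at hu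
      have : x j1 < -1 := by linarith [hB1'.2, hrn]
      have h5 : (y j1 : ℝ) < -1 := by rw [hx] at this; exact this
      have h6 : y j1 < -1 := by exact_mod_cast h5
      rw [abs_le] at hy1int
      omega
    have hxb : x j1 = -2 := by rw [hx]; simp [hyj1m2]
    -- the pair inequality
    set M01 : Finset (Fin n) := insert j0 {j1} with hM01
    have hcard : M01.card = 2 := by
      rw [hM01, Finset.card_insert_of_notMem (by simp [hj0j1]), Finset.card_singleton]
    have hM01ne : M01.Nonempty := ⟨j0, by simp [hM01]⟩
    have hj0mem : j0 ∈ M01 := by simp [hM01]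
    have hj1mem : j1 ∈ M01 := by simp [hM01]
    have hmin : M01.min' hM01ne = j0 := by
      have hmem := M01.min'_mem hM01ne
      rcases Finset.mem_insert.mp hmem with h | h
      · exact h
      · exfalso
        rw [Finset.mem_singleton] at h
        have hle := M01.min'_le j0 hj0mem
        rw [h] at hle
        have hv := Fin.le_def.mp hle
        omega
    have hfeasN := feas_N x hfeas M01 (by rw [hcard]) hM01ne
    have hv0 : vN M01 hM01ne j0 = -(2:ℝ)⁻¹ := by
      unfold vN
      rw [if_pos hmin.symm, hcard]
      norm_num
    have hv1 : vN M01 hM01ne j1 = (2:ℝ)⁻¹ := by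
      unfold vN
      rw [if_neg (by rw [hmin]; intro h; exact hj0j1 h.symm), if_pos hj1mem, hcard]
      norm_num
    have hvout2 : ∀ i : Fin n, j1 < i → vN M01 hM01ne i = -((2:ℝ)^n)⁻¹ := by
      intro i hi
      have hvi := Fin.lt_def.mp hi
      have hine : i ∉ M01 := by
        intro hmem'
        rcases Finset.mem_insert.mp hmem' with he | he
        · have := congrArg Fin.val he; omega
        · rw [Finset.mem_singleton] at he
          have := congrArg Fin.val he; omega
      unfold vN
      rw [if_neg (by rw [hmin]; intro he; exact hine (he ▸ hj0mem)), if_neg hine, hcard]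
      norm_num
    set T := ∑ i ∈ Finset.univ.filter (fun i : Fin n => j1 < i), x i * vN M01 hM01ne i with hT
    have hfil2 : Finset.univ.filter (fun i : Fin n => ¬ j1 < i) = {j0, j1} := by
      ext i
      simp only [Finset.mem_filter, Finset.mem_univ, true_and, Finset.mem_insert,
        Finset.mem_singleton, Fin.lt_def, Fin.ext_iff, hj0v, hj1v]
      omega
    have hlhs : lhsN M01 hM01ne x
        = T + (x j0 * vN M01 hM01ne j0 + x j1 * vN M01 hM01ne j1) := by
      rw [lhsN_eq]
      have hs := Finset.sum_filter_add_sum_filter_not Finset.univ (fun i : Fin n => j1 < i)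
        (fun i => x i * vN M01 hM01ne i)
      rw [hfil2, Finset.sum_pair hj0j1] at hs
      rw [← hs, ← hT]
    have hTb : |T| ≤ (n:ℝ) * ((2:ℝ)^n)⁻¹ := by
      have hpn : (0:ℝ) < ((2:ℝ)^n)⁻¹ := by positivity
      have h1 := Finset.abs_sum_le_sum_abs (fun i => x i * vN M01 hM01ne i)
        (Finset.univ.filter (fun i : Fin n => j1 < i))
      have h2' : ∀ i ∈ Finset.univ.filter (fun i : Fin n => j1 < i),
          |x i * vN M01 hM01ne i| ≤ ((2:ℝ)^n)⁻¹ := by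
        intro i hi
        rw [Finset.mem_filter] at hi
        have hvi := Fin.lt_def.mp hi.2
        rw [hvout2 i hi.2, abs_mul, abs_neg, abs_of_pos hpn]
        have hxi : |x i| ≤ 1 := by
          rw [habs_cast]; exact_mod_cast h2 i (by omega)
        nlinarith [hpn, abs_nonneg (x i)]
      have h3 := Finset.sum_le_card_nsmul _ _ _ h2'
      rw [nsmul_eq_mul] at h3
      have h7 : ((Finset.univ.filter (fun i : Fin n => j1 < i)).card : ℝ) ≤ (n:ℝ) := by
        have hc := Finset.card_filter_le Finset.univ (fun i : Fin n => j1 < i)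
        have h8 : (Finset.univ : Finset (Fin n)).card = n := by simp
        exact_mod_cast (h8 ▸ hc)
      have h9 : ((Finset.univ.filter (fun i : Fin n => j1 < i)).card : ℝ) * ((2:ℝ)^n)⁻¹
          ≤ (n:ℝ) * ((2:ℝ)^n)⁻¹ := mul_le_mul_of_nonneg_right h7 hpn.le
      rw [hT]
      linarith [h1, h3, h9]
    have h2n : (2:ℝ) * n ≤ 2^n := by
      have hA1 : n ≤ 2^(n-1) := by have := (n-1).lt_two_pow_self; omega
      have hA2 : (2:ℕ)^n = 2 * 2^(n-1) := by
        rw [← pow_succ']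
        congr 1
        omega
      have : 2*n ≤ (2:ℕ)^n := by omega
      exact_mod_cast this
    have hTb2 : |T| ≤ 2⁻¹ := by
      have hp : (0:ℝ) < 2^n := by positivity
      have hinv : ((2:ℝ)^n) * ((2:ℝ)^n)⁻¹ = 1 := mul_inv_cancel₀ (ne_of_gt hp)
      have h8 : (2:ℝ)*n*((2:ℝ)^n)⁻¹ ≤ 2^n * ((2:ℝ)^n)⁻¹ :=
        mul_le_mul_of_nonneg_right h2n (by positivity)
      rw [hinv] at h8
      linarith [hTb]
    have habsN := abs_le.mp hfeasN
    rw [hlhs, hxa, hxb, hv0, hv1] at habsN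
    have := habsN.1
    have hTle := (abs_le.mp hTb2).2
    linarith
  -- the minimum entry is 1
  have hyl1 : y ℓ = 1 := by
    rcases Nat.lt_or_ge ℓ.val 2 with hl2 | hl2
    · rcases Nat.lt_or_ge ℓ.val 1 with hl1 | hl1
      · have hlj0 : ℓ = j0 := Fin.ext (by omega)
        rw [hlj0] at hpos ⊢
        have h9 := abs_le.mp hy0int
        have h10 := hexcl20
        omega
      · have hlj1 : ℓ = j1 := Fin.ext (by omega)
        have hj0lt : j0 < ℓ := by rw [hlj1]; exact Fin.lt_def.mpr (by omega)
        have hy00 : y j0 = 0 := hzero_lt j0 hj0lt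
        rw [hlj1] at hpos ⊢
        have h9 := abs_le.mp hy1int
        have h10 : y j1 ≠ 2 := fun hb => hexcl02 ⟨hy00, hb⟩
        omega
    · have h9 := abs_le.mp (h2 ℓ hl2)
      omega
  -- entries above ℓ lie in [-1, 1]
  have hbnd : ∀ i : Fin n, ℓ < i → -1 ≤ y i ∧ y i ≤ 1 := by
    intro i hi
    rcases Nat.lt_or_ge i.val 2 with hi2 | hi2
    · have hv := Fin.lt_def.mp hi
      have hij1 : i = j1 := Fin.ext (by omega)
      have hlj0 : ℓ = j0 := Fin.ext (by omega)
      have hy01 : y j0 = 1 := by rw [← hlj0]; exact hyl1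
      have h10 : y j1 ≠ 2 := fun hb => hexcl12 ⟨hy01, hb⟩
      have h11 : y j1 ≠ -2 := fun hb => hexcl1m2 ⟨hy01, hb⟩
      have h12 := abs_le.mp hy1int
      rw [hij1]
      omega
    · exact abs_le.mp (h2 i hi2)
  -- no entry above ℓ is positive
  have hK : ∀ i : Fin n, ℓ < i → y i ≤ 0 := by
    by_contra hKn
    push_neg at hKn
    obtain ⟨i₀, hi₀l, hi₀p⟩ := hKn
    set K := Finset.univ.filter (fun i => ℓ < i ∧ 1 ≤ y i) with hKdef
    have hKne : K.Nonempty := by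
      refine ⟨i₀, ?_⟩
      rw [hKdef, Finset.mem_filter]
      exact ⟨Finset.mem_univ _, hi₀l, by omega⟩
    set k := K.min' hKne with hkdef
    have hkK : k ∈ K := K.min'_mem hKne
    rw [hKdef, Finset.mem_filter] at hkK
    have hlk : ℓ < k := hkK.2.1
    have hlkv := Fin.lt_def.mp hlk
    have hyk1 : y k = 1 := by
      have h9 := (hbnd k hlk).2
      have h10 := hkK.2.2
      omega
    have hmid : ∀ i : Fin n, ℓ < i → i < k → y i ≤ 0 := by
      intro i ha1 ha2
      by_contra h3
      push_neg at h3
      have hiK : i ∈ K := by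
        rw [hKdef, Finset.mem_filter]
        exact ⟨Finset.mem_univ _, ha1, by omega⟩
      have := K.min'_le i hiK
      exact absurd ha2 (not_lt.mpr this)
    -- decomposition of A
    set Bl := ∑ i ∈ Finset.univ.filter (fun i : Fin n => ℓ < i), x i * rr (i.val + 1) with hBl_def
    set Bk := ∑ i ∈ Finset.univ.filter (fun i : Fin n => k < i), x i * rr (i.val + 1) with hBk_def
    set Smid := Finset.univ.filter (fun i : Fin n => ℓ < i ∧ i < k) with hSmid_def
    have hA_head : ∑ i ∈ Finset.univ.filter (fun i : Fin n => ¬ ℓ < i), x i * rr (i.val + 1)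
        = x ℓ * rr (ℓ.val + 1) := by
      apply Finset.sum_eq_single_of_mem ℓ (by simp [Finset.mem_filter])
      intro i hi hne
      rw [Finset.mem_filter] at hi
      have h5 : i < ℓ := lt_of_le_of_ne (not_lt.mp hi.2) hne
      have h6 : y i = 0 := hzero_lt i h5
      rw [hx]; simp [h6]
    have hsplit1 := Finset.sum_filter_add_sum_filter_not Finset.univ (fun i : Fin n => ℓ < i)
      (fun i => x i * rr (i.val + 1))
    rw [hA_head, ← hA_def, ← hBl_def] at hsplit1
    have hsplit2 := Finset.sum_filter_add_sum_filter_not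
      (Finset.univ.filter (fun i : Fin n => ℓ < i)) (fun i : Fin n => k < i)
      (fun i => x i * rr (i.val + 1))
    have he1 : (Finset.univ.filter (fun i : Fin n => ℓ < i)).filter (fun i : Fin n => k < i)
        = Finset.univ.filter (fun i : Fin n => k < i) := by
      rw [Finset.filter_filter]
      ext i
      simp only [Finset.mem_filter, Finset.mem_univ, true_and, Fin.lt_def]
      omega
    have he2 : (Finset.univ.filter (fun i : Fin n => ℓ < i)).filter (fun i : Fin n => ¬ k < i)
        = insert k Smid := by
      rw [Finset.filter_filter, hSmid_def]
      ext i
      simp only [Finset.mem_filter, Finset.mem_univ, true_and, Finset.mem_insert,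
        Fin.lt_def, Fin.ext_iff]
      omega
    have hknotmid : k ∉ Smid := by
      rw [hSmid_def, Finset.mem_filter]
      rintro ⟨-, -, h5⟩
      exact absurd h5 (lt_irrefl k)
    rw [he1, he2, Finset.sum_insert hknotmid, ← hBl_def, ← hBk_def] at hsplit2
    -- bound the middle sum
    have hSmid_ge : -(rr (ℓ.val + 1) - rr k.val) ≤ ∑ i ∈ Smid, x i * rr (i.val + 1) := by
      have hub := sum_rr1_le Smid (ℓ.val + 1) k.val (by omega)
        (by intro i hi; rw [hSmid_def, Finset.mem_filter] at hi
            have := Fin.lt_def.mp hi.2.1; omega)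
        (by intro i hi; rw [hSmid_def, Finset.mem_filter] at hi
            exact Fin.lt_def.mp hi.2.2)
      have hptw : ∀ i ∈ Smid, -(rr (i.val + 1)) ≤ x i * rr (i.val + 1) := by
        intro i hi
        rw [hSmid_def, Finset.mem_filter] at hi
        have h5 : (-1:ℝ) ≤ x i := by
          show (-1:ℝ) ≤ ((y i : ℤ) : ℝ)
          exact_mod_cast (hbnd i hi.2.1).1
        nlinarith [rr_pos (i.val + 1)]
      have hle := Finset.sum_le_sum hptw
      have hneg : ∑ i ∈ Smid, -(rr (i.val + 1)) = -∑ i ∈ Smid, rr (i.val + 1) := by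
        rw [← Finset.sum_neg_distrib]
      rw [hneg] at hle
      linarith
    -- tail bound at k
    have hBk : |Bk| ≤ rr (k.val + 1) - rr n := by
      apply hBbound k
      intro i hi
      have h5 := hbnd i (lt_trans hlk hi)
      rw [abs_le]; omega
    have hBk' := abs_le.mp hBk
    have hxl1 : x ℓ = 1 := by rw [hx]; simp [hyl1]
    have hxk1 : x k = 1 := by rw [hx]; simp [hyk1]
    have hidk := lhsJ_identity k x
    rw [← hA_def, ← hBk_def] at hidk
    have hrk : rr k.val = 2 * rr (k.val + 1) := by rw [rr_succ]; ring
    have hcontr := hJu k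
    rw [hidk] at hcontr
    -- lhsJ k x = A + Bk + 1*(1 - rr (k+1)) with A = rr(ℓ+1) + Bl, Bl = Bk + rr(k+1) + Smid
    rw [hxk1] at hcontr
    have hAval : A = rr (ℓ.val + 1) + Bl := by rw [← hsplit1, hxl1]; ring
    have hBlval : Bl = Bk + (rr (k.val + 1) + ∑ i ∈ Smid, x i * rr (i.val + 1)) := by
      rw [← hsplit2, hxk1]; ring
    rw [hAval, hBlval] at hcontr
    linarith [rr_pos n]
  -- conclusion
  funext i
  show y i = -1 * chiN N hNne i
  by_cases hiℓ : i = ℓ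
  · have hc : chiN N hNne i = -1 := by
      unfold chiN
      rw [if_pos (hiℓ.trans hℓ)]
    rw [hc, hiℓ, hyl1]; ring
  · by_cases hiN : i ∈ N
    · have hli : ℓ < i := lt_of_le_of_ne (N.min'_le i hiN) (Ne.symm hiℓ)
      have hb1 := hbnd i hli
      have hb2 := hK i hli
      have hb3 : y i ≠ 0 := (hmemN i).mp hiN
      have hb4 : y i = -1 := by omega
      have hc : chiN N hNne i = 1 := by
        unfold chiN
        rw [if_neg (fun he => hiℓ (he.trans hℓ.symm)), if_pos hiN]
      rw [hb4, hc]; ring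
    · have hb3 : y i = 0 := by
        by_contra h4; exact hiN ((hNsupp i).mp h4)
      have hc : chiN N hNne i = 0 := by
        unfold chiN
        rw [if_neg (fun he => hiN (by rw [he, ← hℓ] at *; exact (hℓ ▸ N.min'_mem hNne))),
          if_neg hiN]
      rw [hb3, hc]; ring
lemma classify {n : ℕ} (hn : 1 ≤ n) (y : Fin n → ℤ)
    (hfeas : ∀ idx : LBIdx n, lbIneq idx (fun i => (y i : ℝ)) ≤ 1) :
    y = 0 ∨ ∃ (N : Finset (Fin n)) (hN : N.Nonempty) (σ : ℤ), (σ = 1 ∨ σ = -1) ∧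
      y = fun i => σ * chiN N hN i := by
  by_cases hy0 : y = 0
  · left; exact hy0
  right
  set N := Finset.univ.filter (fun i => y i ≠ 0) with hN
  have hNsupp : ∀ i, y i ≠ 0 ↔ i ∈ N := by
    intro i; rw [hN, Finset.mem_filter]; simp
  have hNne : N.Nonempty := by
    by_contra h
    apply hy0
    funext i
    show y i = 0
    by_contra h2
    exact h ⟨i, (hNsupp i).mp h2⟩
  have hlne : y (N.min' hNne) ≠ 0 := (hNsupp _).mpr (N.min'_mem hNne)
  rcases lt_or_gt_of_ne hlne with hneg | hpos
  · -- negative case: apply classify_pos to -y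
    set z : Fin n → ℤ := fun i => -(y i) with hz
    have hzc : (fun i => (z i : ℝ)) = (fun i => -((y i : ℝ))) := by
      funext i; rw [hz]; push_cast; ring
    have hfeasz : ∀ idx : LBIdx n, lbIneq idx (fun i => (z i : ℝ)) ≤ 1 := by
      rw [hzc]; exact feas_neg _ hfeas
    have hzsupp : ∀ i, z i ≠ 0 ↔ i ∈ N := by
      intro i; rw [hz]; simp only [neg_ne_zero]; exact hNsupp i
    have hzpos : 1 ≤ z (N.min' hNne) := by
      show 1 ≤ -(y (N.min' hNne))
      omega
    have hres := classify_pos hn z hfeasz N hzsupp hNne hzpos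
    refine ⟨N, hNne, 1, Or.inl rfl, ?_⟩
    funext i
    show y i = 1 * chiN N hNne i
    have h4 : -(y i) = -1 * chiN N hNne i := congrFun hres i
    linarith
  · have hres := classify_pos hn y hfeas N hNsupp hNne (by omega)
    refine ⟨N, hNne, -1, Or.inr rfl, hres⟩

lemma card_LBIdx {n : ℕ} (hn : 1 ≤ n) : Fintype.card (LBIdx n) = 2 * (2 ^ n - 1) := by
  have h1 : Fintype.card (LBIdx n)
      = (Fintype.card (Fin n) + Fintype.card {N : Finset (Fin n) // 2 ≤ N.card}) * 2 := by
    rw [Fintype.card_prod, Fintype.card_sum, Fintype.card_bool]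
  have h2 : Fintype.card {N : Finset (Fin n) // 2 ≤ N.card} = 2^n - (n+1) := by
    rw [Fintype.card_subtype]
    have h3 := Finset.card_filter_add_card_filter_not
      (s := (Finset.univ : Finset (Finset (Fin n)))) (p := fun N => 2 ≤ N.card)
    have h4 : (Finset.univ.filter (fun N : Finset (Fin n) => ¬ 2 ≤ N.card)).card = n + 1 := by
      have h5 : (Finset.univ.filter (fun N : Finset (Fin n) => ¬ 2 ≤ N.card))
          = Finset.univ.filter (fun N : Finset (Fin n) => N.card = 0)
            ∪ Finset.univ.filter (fun N : Finset (Fin n) => N.card = 1) := by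
        ext N
        simp only [Finset.mem_filter, Finset.mem_univ, true_and, Finset.mem_union]
        omega
      have hdisj : Disjoint (Finset.univ.filter (fun N : Finset (Fin n) => N.card = 0))
          (Finset.univ.filter (fun N : Finset (Fin n) => N.card = 1)) := by
        rw [Finset.disjoint_left]
        intro a ha hb
        rw [Finset.mem_filter] at ha hb
        omega
      rw [h5, Finset.card_union_of_disjoint hdisj]
      have e0 : Finset.univ.filter (fun N : Finset (Fin n) => N.card = 0)
          = Finset.powersetCard 0 (Finset.univ : Finset (Fin n)) := by
        rw [Finset.powersetCard_eq_filter, Finset.powerset_univ]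
      have e1 : Finset.univ.filter (fun N : Finset (Fin n) => N.card = 1)
          = Finset.powersetCard 1 (Finset.univ : Finset (Fin n)) := by
        rw [Finset.powersetCard_eq_filter, Finset.powerset_univ]
      rw [e0, e1, Finset.card_powersetCard, Finset.card_powersetCard,
        Nat.choose_zero_right, Nat.choose_one_right, Finset.card_univ, Fintype.card_fin]
      omega
    have h6 : (Finset.univ : Finset (Finset (Fin n))).card = 2^n := by
      rw [Finset.card_univ, Fintype.card_finset, Fintype.card_fin]
    have h3' : (Finset.univ.filter (fun N : Finset (Fin n) => 2 ≤ N.card)).card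
        + (Finset.univ.filter (fun N : Finset (Fin n) => ¬ 2 ≤ N.card)).card
        = (Finset.univ : Finset (Finset (Fin n))).card := h3
    omega
  have h7 : n < 2^n := Nat.lt_two_pow_self
  rw [h1, h2, Fintype.card_fin]
  omega

/-- The tight integer point of the inequality indexed by `idx`. -/
def pt {n : ℕ} (idx : LBIdx n) : Fin n → ℤ :=
  match idx with
  | (Sum.inl j, b) => fun i => (if b then -1 else 1) * chiN {j} (Finset.singleton_nonempty j) i
  | (Sum.inr M, b) => fun i => (if b then 1 else -1) *
      chiN M.1 (Finset.card_pos.mp (lt_of_lt_of_le (by norm_num) M.2)) i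

lemma chi_cast {n : ℕ} (N : Finset (Fin n)) (hN : N.Nonempty) (σ : ℤ) :
    (fun i => ((σ * chiN N hN i : ℤ) : ℝ)) = fun i => (σ:ℝ) * ((chiN N hN i : ℤ) : ℝ) := by
  funext i; push_cast; ring
lemma lhsN_irrel {n : ℕ} (M : Finset (Fin n)) (h1 h2 : M.Nonempty) (x : Fin n → ℝ) :
    lhsN M h1 x = lhsN M h2 x := rfl

lemma chiN_irrel {n : ℕ} (M : Finset (Fin n)) (h1 h2 : M.Nonempty) :
    chiN M h1 = chiN M h2 := rfl

lemma tight_classify {n : ℕ} (N : Finset (Fin n)) (hN : N.Nonempty) (σ : ℤ)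
    (hσ : σ = 1 ∨ σ = -1) (idx : LBIdx n)
    (ht : lbIneq idx (fun i => ((σ * chiN N hN i : ℤ) : ℝ)) = 1) :
    (∃ j b, idx = (Sum.inl j, b) ∧ N = {j} ∧ σ = (if b then -1 else 1)) ∨
    (∃ M b, idx = (Sum.inr M, b) ∧ M.1 = N ∧ σ = (if b then 1 else -1)) := by
  rw [chi_cast] at ht
  obtain ⟨s, b⟩ := idx
  cases s with
  | inl j =>
    left
    refine ⟨j, b, rfl, ?_⟩
    simp only [lbIneq] at ht
    rw [lhsJ_smul] at ht
    have hev := evJ_main N hN j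
    have hL2 : lhsJ j (fun i => ((chiN N hN i : ℤ) : ℝ)) = -1 := by
      rcases hσ with rfl | rfl <;> cases b <;> norm_num at ht <;>
        linarith [hev.1.1, hev.1.2]
    refine ⟨hev.2 hL2, ?_⟩
    rw [hL2] at ht
    rcases hσ with rfl | rfl <;> cases b <;> norm_num at ht <;> norm_num
  | inr M =>
    right
    refine ⟨M, b, rfl, ?_⟩
    simp only [lbIneq] at ht
    rw [lhsN_smul] at ht
    have hMne : M.1.Nonempty := Finset.card_pos.mp (lt_of_lt_of_le (by norm_num) M.2)
    rw [lhsN_irrel M.1 _ hMne] at ht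
    have hev := evN_main N M.1 hN hMne M.2
    have hL2 : lhsN M.1 hMne (fun i => ((chiN N hN i : ℤ) : ℝ)) = 1 := by
      rcases hσ with rfl | rfl <;> cases b <;> norm_num at ht <;>
        linarith [hev.1.1, hev.1.2]
    refine ⟨hev.2.mp hL2, ?_⟩
    rw [hL2] at ht
    rcases hσ with rfl | rfl <;> cases b <;> norm_num at ht <;> norm_num

lemma feas_pt {n : ℕ} (N : Finset (Fin n)) (hN : N.Nonempty) (σ : ℤ)
    (hσ : σ = 1 ∨ σ = -1) :
    ∀ idx : LBIdx n, lbIneq idx (fun i => ((σ * chiN N hN i : ℤ) : ℝ)) ≤ 1 := by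
  intro idx
  rw [chi_cast]
  obtain ⟨s, b⟩ := idx
  cases s with
  | inl j =>
    simp only [lbIneq]
    rw [lhsJ_smul]
    have hev := evJ_main N hN j
    rcases hσ with rfl | rfl <;> cases b <;> norm_num <;> linarith [hev.1.1, hev.1.2]
  | inr M =>
    simp only [lbIneq]
    rw [lhsN_smul]
    have hMne : M.1.Nonempty := Finset.card_pos.mp (lt_of_lt_of_le (by norm_num) M.2)
    rw [lhsN_irrel M.1 _ hMne]
    have hev := evN_main N M.1 hN hMne M.2
    rcases hσ with rfl | rfl <;> cases b <;> norm_num <;> linarith [hev.1.1, hev.1.2]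

lemma tight_pt {n : ℕ} (idx : LBIdx n) : lbIneq idx (fun i => ((pt idx i : ℤ) : ℝ)) = 1 := by
  obtain ⟨s, b⟩ := idx
  cases s with
  | inl j =>
    show lbIneq (Sum.inl j, b)
      (fun i => (((if b then -1 else 1) * chiN {j} (Finset.singleton_nonempty j) i : ℤ) : ℝ)) = 1
    rw [chi_cast]
    simp only [lbIneq]
    rw [lhsJ_smul, evJ_singleton j]
    cases b <;> norm_num
  | inr M =>
    have hMne : M.1.Nonempty := Finset.card_pos.mp (lt_of_lt_of_le (by norm_num) M.2)
    show lbIneq (Sum.inr M, b)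
      (fun i => (((if b then 1 else -1) * chiN M.1 hMne i : ℤ) : ℝ)) = 1
    rw [chi_cast]
    simp only [lbIneq]
    rw [lhsN_smul, lhsN_irrel M.1 _ hMne]
    have hev := evN_main M.1 M.1 hMne hMne M.2
    have h1 : lhsN M.1 hMne (fun i => ((chiN M.1 hMne i : ℤ) : ℝ)) = 1 := hev.2.mpr rfl
    rw [h1]
    cases b <;> norm_num

lemma lbIneq_zero {n : ℕ} (idx : LBIdx n) : lbIneq idx (fun _ => (0:ℝ)) = 0 := by
  obtain ⟨s, b⟩ := idx
  cases s with
  | inl j =>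
    simp only [lbIneq]
    rw [lhsJ_zero]
    ring
  | inr M =>
    simp only [lbIneq]
    rw [lhsN_zero]
    ring

theorem stmt_11 {n : ℕ} (hn : 1 ≤ n) :
    Fintype.card (LBIdx n) = 2 * (2 ^ n - 1) ∧
    (∀ idx : LBIdx n,
      ∃! y : Fin n → ℤ,
        (∀ idx' : LBIdx n, lbIneq idx' (fun i => (y i : ℝ)) ≤ 1) ∧
          lbIneq idx (fun i => (y i : ℝ)) = 1) ∧
    ∀ idx₁ idx₂ : LBIdx n, ∀ y : Fin n → ℤ,
      (∀ idx' : LBIdx n, lbIneq idx' (fun i => (y i : ℝ)) ≤ 1) →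
      lbIneq idx₁ (fun i => (y i : ℝ)) = 1 →
      lbIneq idx₂ (fun i => (y i : ℝ)) = 1 → idx₁ = idx₂ := by
  refine ⟨card_LBIdx hn, ?_, ?_⟩
  · intro idx
    have hfeas_pt : ∀ idx' : LBIdx n, lbIneq idx' (fun i => ((pt idx i : ℤ) : ℝ)) ≤ 1 := by
      obtain ⟨s, b⟩ := idx
      cases s with
      | inl j =>
        exact feas_pt {j} (Finset.singleton_nonempty j) (if b then -1 else 1)
          (by cases b <;> [exact Or.inl rfl; exact Or.inr rfl])
      | inr M =>
        exact feas_pt M.1 (Finset.card_pos.mp (lt_of_lt_of_le (by norm_num) M.2))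
          (if b then 1 else -1)
          (by cases b <;> [exact Or.inr rfl; exact Or.inl rfl])
    refine ⟨pt idx, ⟨hfeas_pt, tight_pt idx⟩, ?_⟩
    rintro z ⟨hzf, hzt⟩
    rcases classify hn z hzf with rfl | ⟨N, hNe, σ, hσ, rfl⟩
    · exfalso
      have h0 : (fun i => (((0 : Fin n → ℤ) i : ℤ) : ℝ)) = (fun _ => (0:ℝ)) := by
        funext i; simp
      rw [h0, lbIneq_zero] at hzt
      norm_num at hzt
    · rcases tight_classify N hNe σ hσ idx hzt with
        ⟨j, b, rfl, hNj, hσv⟩ | ⟨M, b, rfl, hMN, hσv⟩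
      · subst hNj
        subst hσv
        rfl
      · subst hMN
        subst hσv
        rfl
  · intro idx₁ idx₂ z hzf h1 h2
    rcases classify hn z hzf with rfl | ⟨N, hNe, σ, hσ, rfl⟩
    · exfalso
      have h0 : (fun i => (((0 : Fin n → ℤ) i : ℤ) : ℝ)) = (fun _ => (0:ℝ)) := by
        funext i; simp
      rw [h0, lbIneq_zero] at h1
      norm_num at h1
    · rcases tight_classify N hNe σ hσ idx₁ h1 with
        ⟨j₁, b₁, rfl, hNj₁, hσ₁⟩ | ⟨M₁, b₁, rfl, hM₁, hσ₁⟩ <;>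
      rcases tight_classify N hNe σ hσ idx₂ h2 with
        ⟨j₂, b₂, rfl, hNj₂, hσ₂⟩ | ⟨M₂, b₂, rfl, hM₂, hσ₂⟩
      · have hj : j₁ = j₂ := by
          have h5 := hNj₁.symm.trans hNj₂
          have := Finset.mem_singleton.mp (h5 ▸ Finset.mem_singleton_self j₁)
          exact this
        have hb : b₁ = b₂ := by
          have h5 := hσ₁.symm.trans hσ₂
          cases b₁ <;> cases b₂ <;> simp_all
        rw [hj, hb]
      · exfalso
        have h5 : 2 ≤ ({j₁} : Finset (Fin n)).card := by
          rw [← hNj₁, ← hM₂]; exact M₂.2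
        rw [Finset.card_singleton] at h5
        omega
      · exfalso
        have h5 : 2 ≤ ({j₂} : Finset (Fin n)).card := by
          rw [← hNj₂, ← hM₁]; exact M₁.2
        rw [Finset.card_singleton] at h5
        omega
      · have hM : M₁ = M₂ := Subtype.ext (hM₁.trans hM₂.symm)
        have hb : b₁ = b₂ := by
          have h5 := hσ₁.symm.trans hσ₂
          cases b₁ <;> cases b₂ <;> simp_all
        rw [hM, hb]
end
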